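/- arXiv:math/0002217 — 8 statements merged into one kernel-verified Lean document; each statement's English description precedes it below -/
import Mathlib

section
/- Any semilocal ring has stable range 1: if R/rad(R) is semisimple, then whenever aR + bR = R there exists x in R such that a + bx is a unit of R. -/
section Jac
variable {R : Type*} [Ring R]

lemma my_isUnit_one_add_jac {j : R} (h : j ∈ Ideal.jacobson (⊥ : Ideal R)) :
    IsUnit (1 + j) := by
  obtain ⟨s, hs⟩ := Ideal.exists_mul_sub_mem_of_sub_one_mem_jacobson (1 + j) (by simpa using h)
  rw [Ideal.mem_bot, sub_eq_zero] at hs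
  -- hs : s * (1 + j) = 1
  have hs1 : s - 1 ∈ Ideal.jacobson (⊥ : Ideal R) := by
    have : s - 1 = -(s * j) := by
      have := hs
      rw [mul_add, mul_one] at this
      linear_combination (norm := noncomm_ring) this
    rw [this]
    exact neg_mem (Submodule.smul_mem _ s h)
  obtain ⟨u, hu⟩ := Ideal.exists_mul_sub_mem_of_sub_one_mem_jacobson s hs1
  rw [Ideal.mem_bot, sub_eq_zero] at hu
  -- hu : u * s = 1
  have hu' : u = 1 + j := by
    calc u = u * (s * (1 + j)) := by rw [hs, mul_one]
    _ = (u * s) * (1 + j) := by rw [mul_assoc]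
    _ = 1 + j := by rw [hu, one_mul]
  exact ⟨⟨1 + j, s, by rw [← hu', hu], hs⟩, rfl⟩

lemma my_isUnit_of_two_sided {v l r : R} (hl : l * v = 1) (hr : v * r = 1) : IsUnit v := by
  have : l = r := by calc l = l * (v * r) := by rw [hr, mul_one]
    _ = (l * v) * r := by rw [mul_assoc]
    _ = r := by rw [hl, one_mul]
  exact ⟨⟨v, r, hr, this ▸ hl⟩, rfl⟩

end Jac

section SR1
variable {S : Type*} [Ring S]

lemma my_sr1_of_unit_regular (hreg : ∀ a : S, ∃ u : Sˣ, a * u * a = a)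
    (a b x y : S) (h : a * x + b * y = 1) : ∃ z, IsUnit (a + b * z) := by
  obtain ⟨u, hu⟩ := hreg a
  obtain ⟨e, he⟩ : ∃ e : S, e = a * ↑u := ⟨_, rfl⟩
  obtain ⟨c, hc⟩ : ∃ c : S, c = y * (1 - e) := ⟨_, rfl⟩
  obtain ⟨n, hn⟩ : ∃ n : S, n = e * (b * c) := ⟨_, rfl⟩
  have hea : e * a = a := by rw [he]; exact hu
  have hee : e * e = e := by
    calc e * e = (e * a) * ↑u := by rw [he]; noncomm_ring
    _ = e := by rw [hea, ← he]
  have h1 : (1 - e) * a = 0 := by rw [sub_mul, one_mul, hea, sub_self]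
  have h2 : (1 - e) * (b * c) = 1 - e := by
    have hby : (1 - e) * (b * y) = 1 - e := by
      have hby' : b * y = 1 - a * x := by linear_combination (norm := noncomm_ring) h
      rw [hby', mul_sub, mul_one, ← mul_assoc, h1, zero_mul, sub_zero]
    calc (1 - e) * (b * c) = ((1 - e) * (b * y)) * (1 - e) := by rw [hc]; noncomm_ring
    _ = (1 - e) * (1 - e) := by rw [hby]
    _ = 1 - e := by rw [sub_mul, mul_sub, mul_sub, one_mul, mul_one, hee]; noncomm_ring
  have hce : c * e = 0 := by rw [hc, mul_assoc, sub_mul, one_mul, hee, sub_self, mul_zero]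
  have hnn : n * n = 0 := by
    calc n * n = e * b * (c * e) * (b * c) := by rw [hn]; noncomm_ring
    _ = 0 := by rw [hce, mul_zero, zero_mul]
  have hv : IsUnit (1 + n) := by
    refine ⟨⟨1 + n, 1 - n, ?_, ?_⟩, rfl⟩
    · linear_combination (norm := noncomm_ring) -hnn
    · linear_combination (norm := noncomm_ring) -hnn
  have hkey : e + b * c = 1 + n := by
    have hbc : b * c = n + (1 - e) := by
      calc b * c = e * (b * c) + (1 - e) * (b * c) := by noncomm_ring
      _ = n + (1 - e) := by rw [h2, hn]
    rw [hbc]; noncomm_ring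
  refine ⟨c * ↑u⁻¹, ?_⟩
  have key2 : a + b * (c * ↑u⁻¹) = (1 + n) * ↑u⁻¹ := by
    rw [← hkey, add_mul, he, mul_assoc a (u : S) _, Units.mul_inv, mul_one, mul_assoc]
  rw [key2]
  exact hv.mul (Units.isUnit _)

end SR1


open Submodule LinearMap

section Cancel
variable {R : Type*} [Ring R]

/-- The sum of two disjoint submodules is isomorphic to their product. -/
noncomputable def mySupEquivProd {N : Type*} [AddCommGroup N] [Module R N]
    {p q : Submodule R N} (h : Disjoint p q) : (p × q) ≃ₗ[R] ↥(p ⊔ q) := by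
  have hinj : Function.Injective (p.subtype.coprod q.subtype) := by
    rw [← ker_eq_bot, ker_coprod_of_disjoint_range, ker_subtype, ker_subtype, prod_bot]
    rwa [range_subtype, range_subtype]
  exact (LinearEquiv.ofInjective _ hinj).trans
    (LinearEquiv.ofEq _ _ (Submodule.sup_eq_range p q).symm)

/-- Relative complements exist in semisimple modules. -/
lemma myExistsRelCompl {N : Type*} [AddCommGroup N] [Module R N] [IsSemisimpleModule R N]
    {p q : Submodule R N} (h : p ≤ q) :
    ∃ r : Submodule R N, r ≤ q ∧ p ⊓ r = ⊥ ∧ p ⊔ r = q := by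
  obtain ⟨c, hc⟩ := exists_isCompl (p.comap q.subtype)
  refine ⟨c.map q.subtype, Submodule.map_subtype_le q c, ?_, ?_⟩
  · have : p ⊓ c.map q.subtype = ((p.comap q.subtype) ⊓ c).map q.subtype := by
      rw [Submodule.map_inf _ (Submodule.injective_subtype q), Submodule.map_comap_subtype,
        inf_of_le_right h]
    rw [this, hc.inf_eq_bot, Submodule.map_bot]
  · have : p ⊔ c.map q.subtype = ((p.comap q.subtype) ⊔ c).map q.subtype := by
      rw [Submodule.map_sup, Submodule.map_comap_subtype, inf_of_le_right h]
    rw [this, hc.sup_eq_top, Submodule.map_top, range_subtype]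

/-- Cancellation of simple submodules: complements of isomorphic simple submodules
are isomorphic. -/
lemma mySimpleCancel {N : Type*} [AddCommGroup N] [Module R N] [IsSemisimpleModule R N]
    {T T' X Y : Submodule R N} [IsSimpleModule R T] [IsSimpleModule R T']
    (e : T ≃ₗ[R] T') (hX : IsCompl T X) (hY : IsCompl T' Y) :
    Nonempty (X ≃ₗ[R] Y) := by
  have hTatom : IsAtom T := isSimpleModule_iff_isAtom.mp ‹_›
  have hT'atom : IsAtom T' := isSimpleModule_iff_isAtom.mp ‹_›
  -- case analysis on T' ≤ X
  by_cases hT'X : T' ≤ X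
  · by_cases hTY : T ≤ Y
    · -- hard case
      obtain ⟨X₀, hX₀le, hX₀inf, hX₀sup⟩ := myExistsRelCompl hT'X
      obtain ⟨Y₀, hY₀le, hY₀inf, hY₀sup⟩ := myExistsRelCompl hTY
      -- W := T ⊔ T'
      have hWX₀ : IsCompl (T ⊔ T') X₀ := by
        constructor
        · rw [disjoint_iff]
          have h1 : (T ⊔ T') ⊓ X = T' := by
            rw [sup_comm, sup_inf_assoc_of_le T hT'X, hX.inf_eq_bot, sup_bot_eq]
          have : (T ⊔ T') ⊓ X₀ = ((T ⊔ T') ⊓ X) ⊓ X₀ := by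
            rw [inf_assoc, inf_of_le_right hX₀le]
          rw [this, h1, hX₀inf]
        · rw [codisjoint_iff, sup_assoc, hX₀sup, hX.sup_eq_top]
      have hWY₀ : IsCompl (T ⊔ T') Y₀ := by
        constructor
        · rw [disjoint_iff]
          have h1 : (T ⊔ T') ⊓ Y = T := by
            rw [sup_inf_assoc_of_le T' hTY, hY.inf_eq_bot, sup_bot_eq]
          have : (T ⊔ T') ⊓ Y₀ = ((T ⊔ T') ⊓ Y) ⊓ Y₀ := by
            rw [inf_assoc, inf_of_le_right hY₀le]
          rw [this, h1, hY₀inf]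
        · rw [codisjoint_iff, sup_comm T T', sup_assoc, hY₀sup, hY.sup_eq_top]
      have g : (↥X₀) ≃ₗ[R] (↥Y₀) :=
        (quotientEquivOfIsCompl _ _ hWX₀).symm.trans (quotientEquivOfIsCompl _ _ hWY₀)
      have e1 : (↥X) ≃ₗ[R] (↥T' × ↥X₀) :=
        (LinearEquiv.ofEq X (T' ⊔ X₀) hX₀sup.symm).trans
          (mySupEquivProd (disjoint_iff.mpr hX₀inf)).symm
      have e2 : (↥T' × ↥X₀) ≃ₗ[R] (↥T × ↥Y₀) := e.symm.prodCongr g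
      have e3 : (↥T × ↥Y₀) ≃ₗ[R] (↥Y) :=
        (mySupEquivProd (disjoint_iff.mpr hY₀inf)).trans (LinearEquiv.ofEq (T ⊔ Y₀) Y hY₀sup)
      exact ⟨e1.trans (e2.trans e3)⟩
    · -- T ⊓ Y = ⊥ : IsCompl T Y, so X ≃ N/T ≃ Y
      have hTYbot : T ⊓ Y = ⊥ := by
        rcases (hTatom.le_iff.mp (inf_le_left : T ⊓ Y ≤ T)) with h | h
        · exact h
        · exact absurd (h ▸ inf_le_right) hTY
      have : IsSimpleModule R (N ⧸ Y) := IsSimpleModule.congr (quotientEquivOfIsCompl _ _ hY.symm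
        |>.trans e.symm)
      have hYco : IsCoatom Y := isSimpleModule_iff_isCoatom.mp this
      have hTle : ¬ T ≤ Y := hTY
      have hcompl : IsCompl T Y := by
        constructor
        · rw [disjoint_iff]; exact hTYbot
        · rw [codisjoint_iff, sup_comm]; exact hYco.2 _ (left_lt_sup.mpr hTle)
      exact ⟨(quotientEquivOfIsCompl T X hX).symm.trans (quotientEquivOfIsCompl T Y hcompl)⟩
  · -- T' ⊓ X = ⊥ : IsCompl T' X, so X ≃ N/T' ≃ Y
    have hbot : T' ⊓ X = ⊥ := by
      rcases (hT'atom.le_iff.mp (inf_le_left : T' ⊓ X ≤ T')) with h | h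
      · exact h
      · exact absurd (h ▸ inf_le_right) hT'X
    have : IsSimpleModule R (N ⧸ X) := IsSimpleModule.congr (quotientEquivOfIsCompl _ _ hX.symm
      |>.trans e)
    have hXco : IsCoatom X := isSimpleModule_iff_isCoatom.mp this
    have hcompl : IsCompl T' X := by
      constructor
      · rw [disjoint_iff]; exact hbot
      · rw [codisjoint_iff, sup_comm]; exact hXco.2 _ (left_lt_sup.mpr hT'X)
    exact ⟨(quotientEquivOfIsCompl T' X hcompl).symm.trans (quotientEquivOfIsCompl T' Y hY)⟩




lemma myProdSS {M N : Type*} [AddCommGroup M] [Module R M] [AddCommGroup N] [Module R N]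
    [IsSemisimpleModule R M] [IsSemisimpleModule R N] : IsSemisimpleModule R (M × N) := by
  refine isSemisimpleModule_of_isSemisimpleModule_submodule'
    (p := fun b : Bool => if b then range (inl R M N) else range (inr R M N)) ?_ ?_
  · rintro (_|_)
    · simpa using IsSemisimpleModule.congr
        (LinearEquiv.ofInjective (inr R M N) LinearMap.inr_injective).symm
    · simpa using IsSemisimpleModule.congr
        (LinearEquiv.ofInjective (inl R M N) LinearMap.inl_injective).symm
  · rw [iSup_bool_eq, if_pos rfl, if_neg Bool.false_ne_true, sup_comm]
    exact LinearMap.isCompl_range_inl_inr.symm.sup_eq_top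


lemma myProdCancelSimple {X Y T : Type*}
    [AddCommGroup X] [Module R X] [AddCommGroup Y] [Module R Y] [AddCommGroup T] [Module R T]
    [IsSemisimpleModule R Y] [IsSimpleModule R T]
    (F : (X × T) ≃ₗ[R] (Y × T)) : Nonempty (X ≃ₗ[R] Y) := by
  have : IsSemisimpleModule R T := IsSemisimpleModule.congr (LinearEquiv.refl R T)
  have hN : IsSemisimpleModule R (Y × T) := myProdSS
  -- submodules of Y × T
  set P1 : Submodule R (Y × T) := (range (inl R X T)).map F.toLinearMap with hP1
  set P2 : Submodule R (Y × T) := (range (inr R X T)).map F.toLinearMap with hP2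
  have hc : IsCompl P1 P2 := by
    constructor
    · rw [disjoint_iff, hP1, hP2, ← Submodule.map_inf F.toLinearMap F.injective,
        LinearMap.isCompl_range_inl_inr.inf_eq_bot, Submodule.map_bot]
    · rw [codisjoint_iff, hP1, hP2, ← Submodule.map_sup (f := F.toLinearMap),
        LinearMap.isCompl_range_inl_inr.sup_eq_top, Submodule.map_top, LinearEquiv.range]
  have hc' : IsCompl (range (inl R Y T)) (range (inr R Y T)) := LinearMap.isCompl_range_inl_inr
  -- P2 is simple, iso to range inr (Y side)
  have eT2 : (↥P2) ≃ₗ[R] T :=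
    ((equivMapOfInjective F.toLinearMap F.injective _).symm.trans
      (LinearEquiv.ofInjective (inr R X T) LinearMap.inr_injective).symm)
  have eT2' : (↥(range (inr R Y T))) ≃ₗ[R] T :=
    (LinearEquiv.ofInjective (inr R Y T) LinearMap.inr_injective).symm
  have : IsSimpleModule R ↥P2 := IsSimpleModule.congr eT2
  have : IsSimpleModule R ↥(range (inr R Y T)) := IsSimpleModule.congr eT2'
  obtain ⟨g⟩ := mySimpleCancel (T := P2) (T' := range (inr R Y T))
    (eT2.trans eT2'.symm) hc.symm hc'.symm
  -- X ≃ range inl ≃ P1 ≃ range inl (Y) ≃ Y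
  have e1 : X ≃ₗ[R] ↥P1 :=
    (LinearEquiv.ofInjective (inl R X T) LinearMap.inl_injective).trans
      (equivMapOfInjective F.toLinearMap F.injective _)
  have e2 : (↥(range (inl R Y T))) ≃ₗ[R] Y :=
    (LinearEquiv.ofInjective (inl R Y T) LinearMap.inl_injective).symm
  exact ⟨e1.trans (g.trans e2)⟩

noncomputable def myProdSubsingleton {X Z : Type*} [AddCommGroup X] [Module R X]
    [AddCommGroup Z] [Module R Z] [Subsingleton Z] : (X × Z) ≃ₗ[R] X :=
  LinearEquiv.ofLinear (LinearMap.fst R X Z) (LinearMap.inl R X Z)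
    (by ext x; simp)
    (by refine LinearMap.ext fun p => ?_; exact Prod.ext rfl (Subsingleton.elim _ _))


lemma myProdCancel {N X Y : Type*} [AddCommGroup N] [Module R N]
    [IsSemisimpleModule R N] [IsArtinian R N]
    [AddCommGroup X] [Module R X] [AddCommGroup Y] [Module R Y]
    [IsSemisimpleModule R X] [IsSemisimpleModule R Y] :
    ∀ Z : Submodule R N, Nonempty ((X × ↥Z) ≃ₗ[R] (Y × ↥Z)) → Nonempty (X ≃ₗ[R] Y) := by
  intro Z
  induction Z using WellFoundedLT.induction with
  | _ Z ih =>
    intro ⟨F⟩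
    rcases IsSemisimpleModule.eq_bot_or_exists_simple_le Z with hbot | ⟨T, hTZ, hT⟩
    · subst hbot
      exact ⟨(myProdSubsingleton (R := R)).symm.trans (F.trans myProdSubsingleton)⟩
    · obtain ⟨Z₀, hZ₀le, hZ₀inf, hZ₀sup⟩ := myExistsRelCompl hTZ
      have hTbot : T ≠ ⊥ := (isSimpleModule_iff_isAtom.mp hT).1
      have hlt : Z₀ < Z := by
        rcases lt_or_eq_of_le hZ₀le with h | h
        · exact h
        · subst h
          exact absurd (by rw [← hZ₀inf, inf_of_le_left hTZ]) hTbot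
      -- Z ≃ T × Z₀
      have eZ : (↥Z) ≃ₗ[R] (↥T × ↥Z₀) :=
        (LinearEquiv.ofEq Z (T ⊔ Z₀) hZ₀sup.symm).trans
          (mySupEquivProd (disjoint_iff.mpr hZ₀inf)).symm
      have assoc1 : ((X × ↥Z₀) × ↥T) ≃ₗ[R] (X × ↥Z) :=
        (LinearEquiv.prodAssoc R X (↥Z₀) (↥T)).trans
          ((LinearEquiv.refl R X).prodCongr
            ((LinearEquiv.prodComm R (↥Z₀) (↥T)).trans eZ.symm))
      have assoc2 : ((Y × ↥Z₀) × ↥T) ≃ₗ[R] (Y × ↥Z) :=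
        (LinearEquiv.prodAssoc R Y (↥Z₀) (↥T)).trans
          ((LinearEquiv.refl R Y).prodCongr
            ((LinearEquiv.prodComm R (↥Z₀) (↥T)).trans eZ.symm))
      have G : ((X × ↥Z₀) × ↥T) ≃ₗ[R] ((Y × ↥Z₀) × ↥T) :=
        assoc1.trans (F.trans assoc2.symm)
      have : IsSemisimpleModule R (Y × ↥Z₀) := myProdSS
      obtain ⟨G₀⟩ := myProdCancelSimple (T := ↥T) G
      exact ih Z₀ hlt ⟨G₀⟩

end Cancel




lemma myUnitRegular (S : Type*) [Ring S] [IsSemisimpleRing S] (a : S) :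
    ∃ u : Sˣ, a * ↑u * a = a := by
  classical
  set φ : S →ₗ[S] S := LinearMap.toSpanSingleton S S a with hφdef
  have hφ : ∀ x : S, φ x = x * a := fun x => by
    rw [hφdef, LinearMap.toSpanSingleton_apply, smul_eq_mul]
  obtain ⟨A, hKA⟩ := exists_isCompl (ker φ)
  obtain ⟨B, hIB⟩ := exists_isCompl (range φ)
  set m : ↥A →ₗ[S] S := φ.comp A.subtype with hmdef
  have hminj : Function.Injective m := by
    rw [← LinearMap.ker_eq_bot, hmdef, LinearMap.ker_comp, eq_bot_iff]
    rintro x hx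
    have hx' : (x : S) ∈ ker φ ⊓ A := ⟨hx, x.2⟩
    rw [hKA.inf_eq_bot, Submodule.mem_bot] at hx'
    simpa [Submodule.mem_bot] using Subtype.ext hx'
  have hmrange : range m = range φ := by
    have hmapker : (ker φ).map φ = ⊥ := by
      rw [eq_bot_iff]; rintro x ⟨y, hy, rfl⟩
      rw [Submodule.mem_bot]; exact hy
    have : range m = A.map φ := by
      rw [hmdef, LinearMap.range_comp, Submodule.range_subtype]
    rw [this, ← Submodule.map_top (f := φ), ← hKA.sup_eq_top, Submodule.map_sup, hmapker,
      bot_sup_eq]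
  set eAI : (↥A) ≃ₗ[S] ↥(range φ) :=
    (LinearEquiv.ofInjective m hminj).trans (LinearEquiv.ofEq _ _ hmrange) with heAI
  have hcoe : ∀ x : ↥A, φ ↑x = ↑(eAI x) := fun x => by
    rw [heAI]; rfl
  -- cancellation gives B ≃ ker φ
  obtain ⟨g⟩ : Nonempty ((↥B) ≃ₗ[S] ↥(ker φ)) := by
    have e1 : (↥B × ↥(range φ)) ≃ₗ[S] S :=
      (LinearEquiv.prodComm S _ _).trans (prodEquivOfIsCompl (range φ) B hIB)
    have e2 : (↥(ker φ) × ↥(range φ)) ≃ₗ[S] S :=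
      ((LinearEquiv.refl S (↥(ker φ))).prodCongr eAI.symm).trans
        (prodEquivOfIsCompl (ker φ) A hKA)
    exact myProdCancel (range φ) ⟨e1.trans e2.symm⟩
  set ψ : S ≃ₗ[S] S :=
    (prodEquivOfIsCompl (range φ) B hIB).symm.trans
      ((eAI.symm.prodCongr g).trans (prodEquivOfIsCompl A (ker φ) hKA.symm)) with hψ
  set u : S := ψ 1 with hu
  set w : S := ψ.symm 1 with hw
  have h1 : u * w = 1 := by
    calc u * w = u • ψ.symm 1 := by rw [smul_eq_mul, hw]
    _ = ψ.symm (u • (1 : S)) := (map_smul ψ.symm u 1).symm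
    _ = ψ.symm (ψ 1) := by rw [smul_eq_mul, mul_one, hu]
    _ = 1 := ψ.symm_apply_apply 1
  have h2 : w * u = 1 := by
    calc w * u = w • ψ 1 := by rw [smul_eq_mul, hu]
    _ = ψ (w • (1 : S)) := (map_smul ψ w 1).symm
    _ = ψ (ψ.symm 1) := by rw [smul_eq_mul, mul_one, hw]
    _ = 1 := ψ.apply_symm_apply 1
  refine ⟨⟨u, w, h1, h2⟩, ?_⟩
  have ha : a ∈ range φ := ⟨1, by rw [hφ, one_mul]⟩
  have hψa : ψ a = a * u := by
    calc ψ a = ψ (a • (1 : S)) := by rw [smul_eq_mul, mul_one]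
    _ = a • ψ 1 := map_smul ψ a 1
    _ = a * u := by rw [smul_eq_mul, hu]
  have hdecomp : ψ a = ↑(eAI.symm ⟨a, ha⟩) := by
    rw [hψ]
    show prodEquivOfIsCompl A (ker φ) hKA.symm
      ((eAI.symm.prodCongr g) ((prodEquivOfIsCompl (range φ) B hIB).symm a)) = _
    have : (prodEquivOfIsCompl (range φ) B hIB).symm a
        = ((⟨a, ha⟩ : ↥(range φ)), (0 : ↥B)) :=
      prodEquivOfIsCompl_symm_apply_left (range φ) B hIB (⟨a, ha⟩ : ↥(range φ))
    rw [this]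
    show prodEquivOfIsCompl A (ker φ) hKA.symm (eAI.symm ⟨a, ha⟩, g 0) = _
    rw [map_zero, coe_prodEquivOfIsCompl']
    simp
  have : φ (ψ a) = a := by
    rw [hdecomp, hcoe, eAI.apply_symm_apply]
  rw [hψa, hφ] at this
  exact this


/-- Any semilocal ring (i.e. `R / rad R` is semisimple) has stable range 1. -/
theorem semilocal_stableRange1 (R S : Type*) [Ring R] [Ring S] [IsSemisimpleRing S]
    (f : R →+* S) (hf : Function.Surjective f)
    (hker : ∀ a : R, f a = 0 ↔ a ∈ Ideal.jacobson (⊥ : Ideal R)) :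
    ∀ a b : R, (∃ x y : R, a * x + b * y = 1) → ∃ x : R, IsUnit (a + b * x) := by
  rintro a b ⟨x, y, hxy⟩
  have hS : f a * f x + f b * f y = 1 := by
    rw [← map_mul, ← map_mul, ← map_add, hxy, map_one]
  obtain ⟨z', hz'⟩ := my_sr1_of_unit_regular (myUnitRegular S) (f a) (f b) (f x) (f y) hS
  obtain ⟨z, rfl⟩ := hf z'
  obtain ⟨s, hs⟩ := hz'
  obtain ⟨w, hw⟩ := hf (↑s⁻¹ : S)
  set v : R := a + b * z with hv
  have hfv : f v = ↑s := by rw [hv, map_add, map_mul, hs]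
  have h1 : v * w - 1 ∈ Ideal.jacobson (⊥ : Ideal R) := (hker _).mp (by
    rw [map_sub, map_mul, hfv, hw, Units.mul_inv, map_one, sub_self])
  have h2 : w * v - 1 ∈ Ideal.jacobson (⊥ : Ideal R) := (hker _).mp (by
    rw [map_sub, map_mul, hfv, hw, Units.inv_mul, map_one, sub_self])
  have hu1 : IsUnit (v * w) := by
    have h := my_isUnit_one_add_jac h1
    rwa [show (1 : R) + (v * w - 1) = v * w by noncomm_ring] at h
  have hu2 : IsUnit (w * v) := by
    have h := my_isUnit_one_add_jac h2
    rwa [show (1 : R) + (w * v - 1) = w * v by noncomm_ring] at h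
  obtain ⟨p, hp⟩ := hu1
  obtain ⟨q, hq⟩ := hu2
  have hr : v * (w * ↑p⁻¹) = 1 := by
    rw [← mul_assoc, ← hp, Units.mul_inv]
  have hl : (↑q⁻¹ * w) * v = 1 := by
    rw [mul_assoc, ← hq, Units.inv_mul]
  exact ⟨z, my_isUnit_of_two_sided hl hr⟩
end

section
/- Every nonzero projective module P over any ring R has a maximal submodule; more precisely, rad(R)·P = rad(P) ≠ P, where rad(P) is the intersection of all maximal submodules of P. -/
open MulOpposite

section Aux

variable {R : Type*} [Ring R]

private lemma aux_isUnit_one_add_swap {a b : R} (h : IsUnit (1 + a * b)) :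
    IsUnit (1 + b * a) := by
  obtain ⟨u, hu⟩ := h
  set c := (↑u⁻¹ : R) with hc
  have h1 : (1 + a * b) * c = 1 := by rw [← hu]; exact u.mul_inv
  have h2 : c * (1 + a * b) = 1 := by rw [← hu]; exact u.inv_mul
  refine ⟨⟨1 + b * a, 1 - b * c * a, ?_, ?_⟩, rfl⟩
  · have key : (1 + b * a) * (1 - b * c * a) = 1 + b * a - b * ((1 + a * b) * c) * a := by
      noncomm_ring
    rw [key, h1]; noncomm_ring
  · have key : (1 - b * c * a) * (1 + b * a) = 1 + b * a - b * (c * (1 + a * b)) * a := by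
      noncomm_ring
    rw [key, h2]; noncomm_ring

/-- `1 + j` is a unit for `j` in the Jacobson radical (of any ring). -/
private lemma aux_isUnit_one_add {j : R} (hj : j ∈ Ideal.jacobson (⊥ : Ideal R)) :
    IsUnit (1 + j) := by
  have hli : ∀ k ∈ Ideal.jacobson (⊥ : Ideal R), ∃ z : R, z * (1 + k) = 1 := by
    intro k hk
    obtain ⟨z, hz⟩ := Ideal.mem_jacobson_iff.mp hk 1
    rw [Submodule.mem_bot, sub_eq_zero, mul_one] at hz
    exact ⟨z, by rw [mul_add, mul_one, add_comm]; exact hz⟩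
  obtain ⟨z, hz⟩ := hli j hj
  have hzj : -(z * j) ∈ Ideal.jacobson (⊥ : Ideal R) :=
    neg_mem (Ideal.mul_mem_left _ z hj)
  obtain ⟨w, hw⟩ := hli _ hzj
  have hzeq : 1 + -(z * j) = z := by
    have h3 : z + z * j = 1 := by rw [mul_add, mul_one] at hz; exact hz
    rw [← h3]; abel
  rw [hzeq] at hw
  have hwz : w = 1 + j := by
    calc w = w * (z * (1 + j)) := by rw [hz, mul_one]
    _ = w * z * (1 + j) := by rw [mul_assoc]
    _ = 1 + j := by rw [hw, one_mul]
  exact ⟨⟨1 + j, z, by rw [← hwz]; exact hw, hz⟩, rfl⟩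

private lemma aux_op_mem_jacobson {c : R} (hc : c ∈ Ideal.jacobson (⊥ : Ideal R)) :
    op c ∈ Ideal.jacobson (⊥ : Ideal Rᵐᵒᵖ) := by
  rw [Ideal.mem_jacobson_iff]
  intro y
  have h1 : IsUnit (1 + c * unop y) :=
    aux_isUnit_one_add_swap (aux_isUnit_one_add (Ideal.mul_mem_left _ (unop y) hc))
  obtain ⟨u, hu⟩ := h1
  refine ⟨op (↑u⁻¹ : R), ?_⟩
  rw [Submodule.mem_bot]
  refine unop_injective ?_
  simp only [unop_mul, unop_add, unop_sub, unop_one, unop_op, unop_zero]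
  have h2 : (1 + c * unop y) * (↑u⁻¹ : R) = 1 := by rw [← hu]; exact u.mul_inv
  rw [add_mul, one_mul] at h2
  rw [sub_eq_zero, add_comm, ← mul_assoc]
  exact h2

variable {P : Type*} [AddCommGroup P] [Module R P]

/-- Any linear functional maps the radical of `P` into the Jacobson radical of `R`. -/
private lemma aux_apply_mem_jacobson (f : P →ₗ[R] R) {x : P}
    (hx : x ∈ sInf {m : Submodule R P | IsCoatom m}) :
    f x ∈ Ideal.jacobson (⊥ : Ideal R) := by
  rw [Ideal.jacobson]
  rw [Submodule.mem_sInf]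
  rintro m ⟨-, hmax⟩
  by_cases h : Submodule.comap f m = ⊤
  · exact Submodule.mem_comap.mp (h ▸ Submodule.mem_top : x ∈ Submodule.comap f m)
  · have hco : IsCoatom (Submodule.comap f m) := by
      constructor
      · exact h
      · intro N hN
        obtain ⟨z, hzN, hz⟩ : ∃ z ∈ N, f z ∉ m := by
          by_contra hcon
          push_neg at hcon
          exact absurd (fun w hw => Submodule.mem_comap.mpr (hcon w hw)) hN.not_ge
        have hmco : IsCoatom m := Ideal.isMaximal_def.mp hmax
        have htop : m ⊔ Ideal.span {f z} = ⊤ := by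
          refine hmco.2 _ (left_lt_sup.mpr ?_)
          intro hle
          exact hz (hle (Ideal.subset_span rfl))
        rw [eq_top_iff]
        intro p _
        have hp : f p ∈ m ⊔ Ideal.span {f z} := htop ▸ Submodule.mem_top
        obtain ⟨u, hu, v, hv, huv⟩ := Submodule.mem_sup.mp hp
        obtain ⟨r, hr⟩ := Submodule.mem_span_singleton.mp hv
        have h1 : p - r • z ∈ Submodule.comap f m := by
          rw [Submodule.mem_comap, map_sub, map_smul]
          have : f p - r • f z = u := by rw [← huv, hr]; abel
          rw [this]
          exact hu
        have h2 : p - r • z ∈ N := hN.le h1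
        have := N.add_mem h2 (N.smul_mem r hzN)
        simpa using this
    exact Submodule.mem_sInf.mp hx _ hco

/-- The Jacobson radical times the module is contained in every maximal submodule. -/
private lemma aux_smul_le_coatom {m : Submodule R P} (hm : IsCoatom m) :
    (Ideal.jacobson (⊥ : Ideal R)) • (⊤ : Submodule R P) ≤ m := by
  refine Submodule.smul_le.mpr ?_
  intro c hc p _
  by_contra hcp
  have htop : m ⊔ Submodule.span R {c • p} = ⊤ := by
    refine hm.2 _ (left_lt_sup.mpr ?_)
    intro hle
    exact hcp (hle (Submodule.subset_span rfl))
  have hp : p ∈ m ⊔ Submodule.span R {c • p} := htop ▸ Submodule.mem_top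
  obtain ⟨y, hy, v, hv, hyv⟩ := Submodule.mem_sup.mp hp
  obtain ⟨r, hr⟩ := Submodule.mem_span_singleton.mp hv
  have hmem : (1 - r * c) • p ∈ m := by
    have : (1 - r * c) • p = y := by
      rw [sub_smul, one_smul, mul_smul, hr, ← hyv]
      abel
    rw [this]; exact hy
  have hunit : IsUnit (1 - r * c) := by
    have h1 : IsUnit (1 + -(r * c)) :=
      aux_isUnit_one_add (neg_mem (Ideal.mul_mem_left _ r hc))
    rwa [← sub_eq_add_neg] at h1
  obtain ⟨u, hu⟩ := hunit
  have hpm : p ∈ m := by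
    have : p = (↑u⁻¹ : R) • ((1 - r * c) • p) := by
      rw [← hu, ← mul_smul, u.inv_mul, one_smul]
    rw [this]
    exact m.smul_mem _ hmem
  exact hcp (m.smul_mem c hpm)

/-- Jacobson radical is closed under right multiplication (it is two-sided). -/
private lemma aux_jac_mul_right {c : R} (hc : c ∈ Ideal.jacobson (⊥ : Ideal R)) (r : R) :
    c * r ∈ Ideal.jacobson (⊥ : Ideal R) :=
  (Ideal.jacobson (⊥ : Ideal R)).mul_mem_right r hc

/-- Nakayama's lemma over a possibly noncommutative ring. -/
private lemma aux_nakayama {M : Type*} [AddCommGroup M] [Module R M] (T : Finset M)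
    (hle : Submodule.span R (T : Set M)
      ≤ Ideal.jacobson (⊥ : Ideal R) • Submodule.span R (T : Set M)) :
    Submodule.span R (T : Set M) = ⊥ := by
  classical
  induction T using Finset.induction_on with
  | empty => simp
  | @insert y T' hyT' IH =>
    rw [Finset.coe_insert] at hle ⊢
    have hspan : Submodule.span R (insert y (T' : Set M))
        = Submodule.span R {y} ⊔ Submodule.span R (T' : Set M) := Submodule.span_insert y _
    have hy : y ∈ Ideal.jacobson (⊥ : Ideal R) • Submodule.span R (insert y (T' : Set M)) :=
      hle (Submodule.subset_span (Set.mem_insert y _))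
    have hsmul : Ideal.jacobson (⊥ : Ideal R) • Submodule.span R (insert y (T' : Set M))
        ≤ Submodule.map (LinearMap.toSpanSingleton R M y) (Ideal.jacobson (⊥ : Ideal R))
          ⊔ Submodule.span R (T' : Set M) := by
      rw [hspan, Submodule.smul_sup]
      refine sup_le_sup ?_ ?_
      · refine Submodule.smul_le.mpr ?_
        intro c hc m hm
        obtain ⟨r, rfl⟩ := Submodule.mem_span_singleton.mp hm
        refine Submodule.mem_map.mpr ⟨c * r, aux_jac_mul_right hc r, ?_⟩
        rw [LinearMap.toSpanSingleton_apply, mul_smul]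
      · exact Submodule.smul_le.mpr fun c _ m hm => Submodule.smul_mem _ c hm
    obtain ⟨z, hz, w, hw, hzw⟩ := Submodule.mem_sup.mp (hsmul hy)
    obtain ⟨c, hcJ, rfl⟩ := Submodule.mem_map.mp hz
    have hyw : (1 - c) • y = w := by
      rw [sub_smul, one_smul]
      have h3 : c • y + w = y := by
        simpa [LinearMap.toSpanSingleton_apply] using hzw
      exact (eq_sub_of_add_eq' h3).symm
    have hu : IsUnit (1 - c) := by
      have := aux_isUnit_one_add (neg_mem hcJ)
      rwa [← sub_eq_add_neg] at this
    obtain ⟨u, hu'⟩ := hu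
    have hyT : y ∈ Submodule.span R (T' : Set M) := by
      have h4 : y = (↑u⁻¹ : R) • ((1 - c) • y) := by
        rw [← hu', ← mul_smul, u.inv_mul, one_smul]
      rw [h4, hyw]
      exact Submodule.smul_mem _ _ hw
    have hEq : Submodule.span R (insert y (T' : Set M)) = Submodule.span R (T' : Set M) := by
      rw [hspan, sup_eq_right.mpr ((Submodule.span_singleton_le_iff_mem y _).mpr hyT)]
    rw [hEq] at hle ⊢
    exact IH hle

end Aux

/-- Every nonzero projective module has a maximal submodule; more precisely
`rad(R) • P = rad(P) ≠ P`, where `rad(P)` is the intersection of all maximal submodules. -/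
theorem projective_radical (R : Type*) [Ring R] (P : Type*) [AddCommGroup P] [Module R P]
    [Nontrivial P] [Module.Projective R P] :
    (Ideal.jacobson (⊥ : Ideal R)) • (⊤ : Submodule R P)
        = sInf {m : Submodule R P | IsCoatom m} ∧
      sInf {m : Submodule R P | IsCoatom m} ≠ ⊤ := by
  classical
  obtain ⟨s, hs⟩ := Module.projective_def.mp ‹Module.Projective R P›
  -- rad(P) ≤ J • P, via the dual basis
  have hrad_le : sInf {m : Submodule R P | IsCoatom m}
      ≤ (Ideal.jacobson (⊥ : Ideal R)) • (⊤ : Submodule R P) := by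
    intro x hx
    have hxa : (s x).sum (fun p r => r • p) = x := by
      have := hs x
      rwa [Finsupp.linearCombination_apply] at this
    rw [← hxa]
    refine Submodule.sum_mem _ fun y hy => ?_
    refine Submodule.smul_mem_smul ?_ Submodule.mem_top
    exact aux_apply_mem_jacobson ((Finsupp.lapply y).comp s) hx
  have heq : (Ideal.jacobson (⊥ : Ideal R)) • (⊤ : Submodule R P)
      = sInf {m : Submodule R P | IsCoatom m} := by
    refine le_antisymm (le_sInf fun m hm => aux_smul_le_coatom hm) hrad_le
  refine ⟨heq, ?_⟩
  intro htop
  -- If rad(P) = P, every functional lands in J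
  have key : ∀ (y : P) (f : P →ₗ[R] R), f y ∈ Ideal.jacobson (⊥ : Ideal R) := by
    intro y f
    exact aux_apply_mem_jacobson f (htop ▸ Submodule.mem_top)
  obtain ⟨x, hx0⟩ := exists_ne (0 : P)
  set a : P →₀ R := s x with ha
  have hxa : a.sum (fun p r => r • p) = x := by
    have := hs x
    rwa [Finsupp.linearCombination_apply] at this
  -- Nakayama in the opposite ring
  set N : Submodule Rᵐᵒᵖ Rᵐᵒᵖ :=
    Submodule.span Rᵐᵒᵖ (↑(a.support.image fun y => op (a y)) : Set Rᵐᵒᵖ) with hN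
  have hfg : N.FG := ⟨_, rfl⟩
  have hle : N ≤ (Ideal.jacobson (⊥ : Ideal Rᵐᵒᵖ)) • N := by
    rw [hN, Submodule.span_le]
    intro z hz
    simp only [Finset.coe_image, Set.mem_image, Finset.mem_coe] at hz
    obtain ⟨y₀, hy₀, rfl⟩ := hz
    have hay : a y₀ = ∑ p ∈ a.support, a p * (s p) y₀ := by
      conv_lhs => rw [ha, ← hxa, map_finsuppSum]
      rw [Finsupp.sum_apply, Finsupp.sum]
      refine Finset.sum_congr rfl fun p _ => ?_
      rw [map_smul, Finsupp.smul_apply, smul_eq_mul]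
    rw [hay]
    have hop : op (∑ p ∈ a.support, a p * (s p) y₀)
        = ∑ p ∈ a.support, op ((s p) y₀) • op (a p) := by
      refine (map_sum (opAddEquiv : R ≃+ Rᵐᵒᵖ) (fun p => a p * (s p) y₀) a.support).trans ?_
      refine Finset.sum_congr rfl fun p _ => ?_
      rw [opAddEquiv_apply, op_mul, smul_eq_mul]
    rw [hop]
    refine Submodule.sum_mem _ fun p hp => ?_
    refine Submodule.smul_mem_smul ?_ ?_
    · exact aux_op_mem_jacobson (key p ((Finsupp.lapply y₀).comp s))
    · exact Submodule.subset_span (Finset.mem_coe.mpr (Finset.mem_image_of_mem _ hp))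
  have hNbot : N = ⊥ := aux_nakayama _ hle
  have ha0 : a = 0 := by
    ext y
    by_contra hy
    have hmem : op (a y) ∈ N := by
      rw [hN]
      exact Submodule.subset_span (Finset.mem_coe.mpr
        (Finset.mem_image_of_mem _ (Finsupp.mem_support_iff.mpr hy)))
    rw [hNbot, Submodule.mem_bot] at hmem
    exact hy (by simpa using congrArg unop hmem)
  apply hx0
  rw [← hxa, ha0]
  simp
end

section
/- If every ideal of a commutative Noetherian integral domain R (which is not a field) can be generated by two elements, then R has Krull dimension at most 1. -/
open Ideal

section SymbPow

variable {A : Type*} [CommRing A]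

/-- The "symbolic power"-style ideal `{t | ∃ s ∉ P, s * t ∈ P ^ n}`. -/
def symbPow (P : Ideal A) (hP : P.IsPrime) (n : ℕ) : Ideal A where
  carrier := {t | ∃ s, s ∉ P ∧ s * t ∈ P ^ n}
  add_mem' := by
    rintro x y ⟨s, hs, hsx⟩ ⟨t, ht, hty⟩
    refine ⟨s * t, fun hmem => ((hP.mem_or_mem hmem).elim hs ht), ?_⟩
    have hrw : s * t * (x + y) = t * (s * x) + s * (t * y) := by ring
    rw [hrw]
    exact add_mem (Ideal.mul_mem_left _ _ hsx) (Ideal.mul_mem_left _ _ hty)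
  zero_mem' :=
    ⟨1, fun hmem => hP.ne_top (Ideal.eq_top_of_isUnit_mem _ hmem isUnit_one), by simp⟩
  smul_mem' := by
    rintro c x ⟨s, hs, hsx⟩
    refine ⟨s, hs, ?_⟩
    have hrw : s * (c • x) = c * (s * x) := by
      simp only [smul_eq_mul]; ring
    rw [hrw]
    exact Ideal.mul_mem_left _ _ hsx

lemma mem_symbPow {P : Ideal A} {hP : P.IsPrime} {n : ℕ} {t : A} :
    t ∈ symbPow P hP n ↔ ∃ s, s ∉ P ∧ s * t ∈ P ^ n := Iff.rfl

lemma pow_le_symbPow {P : Ideal A} {hP : P.IsPrime} {n : ℕ} : P ^ n ≤ symbPow P hP n :=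
  fun x hx =>
    ⟨1, fun hmem => hP.ne_top (Ideal.eq_top_of_isUnit_mem _ hmem isUnit_one), by simpa⟩

lemma symbPow_succ_le {P : Ideal A} {hP : P.IsPrime} {n : ℕ} :
    symbPow P hP (n + 1) ≤ symbPow P hP n := by
  rintro x ⟨s, hs, hsx⟩
  exact ⟨s, hs, Ideal.pow_le_pow_right (Nat.le_succ n) hsx⟩

lemma symbPow_le_prime {P : Ideal A} {hP : P.IsPrime} {n : ℕ} (hn : n ≠ 0) :
    symbPow P hP n ≤ P := by
  rintro x ⟨s, hs, hsx⟩
  rcases hP.mem_or_mem (Ideal.pow_le_self hn hsx) with h | h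
  · exact absurd h hs
  · exact h

lemma mul_mem_symbPow {P : Ideal A} {hP : P.IsPrime} {n : ℕ} {b t : A} (hb : b ∉ P)
    (h : b * t ∈ symbPow P hP n) : t ∈ symbPow P hP n := by
  obtain ⟨s, hs, hst⟩ := h
  refine ⟨s * b, fun hmem => ((hP.mem_or_mem hmem).elim hs hb), ?_⟩
  rw [show s * b * t = s * (b * t) by ring]
  exact hst

end SymbPow

section LocalCase

open IsLocalRing

variable {A : Type*} [CommRing A] [IsLocalRing A] [IsNoetherianRing A]

/-- If `m = (a, b)` and there is a quadratic relation among `a, b` with unit leading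
coefficient modulo `m³`, then `m² ⊆ (b)`. -/
lemma sq_le_span_singleton (a b lam mu nu : A)
    (hm : maximalIdeal A = Ideal.span {a, b}) (hlam : IsUnit lam)
    (hrel : lam * (a * a) + mu * (a * b) + nu * (b * b) ∈
      maximalIdeal A * (maximalIdeal A * maximalIdeal A)) :
    maximalIdeal A * maximalIdeal A ≤ Ideal.span {b} := by
  haveI : IsNoetherian A A := isNoetherianRing_iff.mp inferInstance
  set m := maximalIdeal A with hmdef
  have h1 : m * m ≤ Ideal.span {a * a, a * b, b * b} := by
    rw [Ideal.mul_le]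
    intro x hx y hy
    rw [hm, Ideal.mem_span_pair] at hx hy
    obtain ⟨r1, r2, hr⟩ := hx
    obtain ⟨s1, s2, hs⟩ := hy
    have hxy : x * y = (r1 * s1) * (a * a) + (r1 * s2 + r2 * s1) * (a * b)
        + (r2 * s2) * (b * b) := by rw [← hr, ← hs]; ring
    rw [hxy]
    refine add_mem (add_mem ?_ ?_) ?_ <;>
      exact Ideal.mul_mem_left _ _ (Ideal.subset_span (by simp))
  have h2 : Ideal.span {a * a, a * b, b * b} ≤ Ideal.span {b} ⊔ m • (m * m) := by
    rw [Ideal.span_le]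
    intro x hx
    simp only [Set.mem_insert_iff, Set.mem_singleton_iff] at hx
    rcases hx with rfl | rfl | rfl
    · -- a * a
      obtain ⟨w, hw⟩ := hlam
      have hinv : (↑w⁻¹ : A) * lam = 1 := by rw [← hw]; exact w.inv_mul
      have key : a * a = (↑w⁻¹ : A) * (lam * (a * a) + mu * (a * b) + nu * (b * b))
          - ((↑w⁻¹ : A) * mu) * (a * b) - ((↑w⁻¹ : A) * nu) * (b * b) := by
        linear_combination (-(a * a)) * hinv
      rw [key]
      refine sub_mem (sub_mem ?_ ?_) ?_
      · exact Submodule.mem_sup_right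
          (by rw [smul_eq_mul]; exact Ideal.mul_mem_left _ _ hrel)
      · exact Submodule.mem_sup_left
          (Ideal.mul_mem_left _ _ (Ideal.mem_span_singleton'.mpr ⟨a, rfl⟩))
      · exact Submodule.mem_sup_left
          (Ideal.mul_mem_left _ _ (Ideal.mem_span_singleton'.mpr ⟨b, rfl⟩))
    · exact Submodule.mem_sup_left (Ideal.mem_span_singleton'.mpr ⟨a, rfl⟩)
    · exact Submodule.mem_sup_left (Ideal.mem_span_singleton'.mpr ⟨b, rfl⟩)
  exact Submodule.le_of_le_smul_of_le_jacobson_bot (IsNoetherian.noetherian _)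
    (le_of_eq (IsLocalRing.jacobson_eq_maximalIdeal ⊥ bot_ne_top).symm) (h1.trans h2)

/-- The core local statement: in a Noetherian local domain in which every ideal is
2-generated, there is no prime strictly between `⊥` and the maximal ideal. -/
theorem local_case (A : Type*) [CommRing A] [IsDomain A] [IsNoetherianRing A] [IsLocalRing A]
    (h2 : ∀ I : Ideal A, ∃ x y : A, I = Ideal.span {x, y})
    (P : Ideal A) (hP : P.IsPrime) (h0 : P ≠ ⊥) (hPm : P < maximalIdeal A) : False := by
  haveI : IsNoetherian A A := isNoetherianRing_iff.mp inferInstance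
  haveI := hP
  set m := maximalIdeal A with hmdef
  obtain ⟨a0, b0, hm0⟩ := h2 m
  obtain ⟨c, d, hm2⟩ := h2 (m * m)
  have ha0 : a0 ∈ m := hm0 ▸ Ideal.subset_span (by simp)
  have hb0 : b0 ∈ m := hm0 ▸ Ideal.subset_span (by simp)
  have hc : c ∈ m * m := hm2 ▸ Ideal.subset_span (by simp)
  have hd : d ∈ m * m := hm2 ▸ Ideal.subset_span (by simp)
  -- write the three quadratic monomials in terms of c, d
  have hsq : ∀ x ∈ m, ∀ y ∈ m, x * y ∈ Ideal.span {c, d} :=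
    fun x hx y hy => hm2 ▸ Ideal.mul_mem_mul hx hy
  obtain ⟨x1, y1, hx1⟩ := Ideal.mem_span_pair.mp (hsq a0 ha0 a0 ha0)
  obtain ⟨x2, y2, hx2⟩ := Ideal.mem_span_pair.mp (hsq a0 ha0 b0 hb0)
  obtain ⟨x3, y3, hx3⟩ := Ideal.mem_span_pair.mp (hsq b0 hb0 b0 hb0)
  -- linear dependence over the residue field
  set k := ResidueField A
  set r := residue A with hr
  set v : Fin 3 → Fin 2 → k :=
    ![![r x1, r y1], ![r x2, r y2], ![r x3, r y3]] with hv
  have hnli : ¬ LinearIndependent k v := by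
    intro hli
    have hcard := hli.fintype_card_le_finrank
    rw [Module.finrank_fin_fun] at hcard
    simp at hcard
  obtain ⟨g, hg, i, hgi⟩ := Fintype.not_linearIndependent_iff.mp hnli
  obtain ⟨l0, hl0⟩ := residue_surjective (g 0)
  obtain ⟨l1, hl1⟩ := residue_surjective (g 1)
  obtain ⟨l2, hl2⟩ := residue_surjective (g 2)
  have hres0 : ∀ z : A, r z = 0 ↔ z ∈ m := fun z => Ideal.Quotient.eq_zero_iff_mem
  have e0 : g 0 * r x1 + g 1 * r x2 + g 2 * r x3 = 0 := by
    have h := congr_fun hg 0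
    simp only [Fin.sum_univ_three, Pi.add_apply, Pi.smul_apply, Pi.zero_apply,
      smul_eq_mul] at h
    exact h
  have e1 : g 0 * r y1 + g 1 * r y2 + g 2 * r y3 = 0 := by
    have h := congr_fun hg 1
    simp only [Fin.sum_univ_three, Pi.add_apply, Pi.smul_apply, Pi.zero_apply,
      smul_eq_mul] at h
    exact h
  have hS1 : l0 * x1 + l1 * x2 + l2 * x3 ∈ m := by
    rw [← hres0, hr, map_add, map_add, _root_.map_mul, _root_.map_mul, _root_.map_mul,
      hl0, hl1, hl2]
    exact e0
  have hS2 : l0 * y1 + l1 * y2 + l2 * y3 ∈ m := by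
    rw [← hres0, hr, map_add, map_add, _root_.map_mul, _root_.map_mul, _root_.map_mul,
      hl0, hl1, hl2]
    exact e1
  -- the quadratic relation
  have hrel : l0 * (a0 * a0) + l1 * (a0 * b0) + l2 * (b0 * b0) ∈ m * (m * m) := by
    have hE : l0 * (a0 * a0) + l1 * (a0 * b0) + l2 * (b0 * b0) =
        (l0 * x1 + l1 * x2 + l2 * x3) * c + (l0 * y1 + l1 * y2 + l2 * y3) * d := by
      linear_combination (-l0) * hx1 - l1 * hx2 - l2 * hx3
    rw [hE]
    exact add_mem (Ideal.mul_mem_mul hS1 hc) (Ideal.mul_mem_mul hS2 hd)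
  -- one of the coefficients is a unit
  have keyu : ∀ z : A, r z ≠ 0 → IsUnit z := by
    intro z hz
    by_contra hu
    exact hz ((hres0 z).mpr ((mem_maximalIdeal z).mpr hu))
  have hunit : IsUnit l0 ∨ IsUnit l1 ∨ IsUnit l2 := by
    fin_cases i
    · exact Or.inl (keyu l0 (by rw [hl0]; simpa using hgi))
    · exact Or.inr (Or.inl (keyu l1 (by rw [hl1]; simpa using hgi)))
    · exact Or.inr (Or.inr (keyu l2 (by rw [hl2]; simpa using hgi)))
  -- get generators a, b of m with m² ⊆ (b)
  have main : ∃ a b : A, m = Ideal.span {a, b} ∧ m * m ≤ Ideal.span {b} := by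
    by_cases hu0 : IsUnit l0
    · exact ⟨a0, b0, hm0, sq_le_span_singleton a0 b0 l0 l1 l2 hm0 hu0 hrel⟩
    by_cases hu2 : IsUnit l2
    · have hm0' : m = Ideal.span {b0, a0} := by rw [hm0, Ideal.span_pair_comm]
      refine ⟨b0, a0, hm0', sq_le_span_singleton b0 a0 l2 l1 l0 hm0' hu2 ?_⟩
      have hrw : l2 * (b0 * b0) + l1 * (b0 * a0) + l0 * (a0 * a0) =
          l0 * (a0 * a0) + l1 * (a0 * b0) + l2 * (b0 * b0) := by ring
      rw [hrw]
      exact hrel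
    · have hu1 : IsUnit l1 := by tauto
      have h0m : l0 ∈ m := (mem_maximalIdeal _).mpr hu0
      have h2m : l2 ∈ m := (mem_maximalIdeal _).mpr hu2
      have hmm : m = Ideal.span {a0, a0 + b0} := by
        rw [hm0]
        apply le_antisymm
        · rw [Ideal.span_le]
          rintro x hx
          simp only [Set.mem_insert_iff, Set.mem_singleton_iff] at hx
          rcases hx with rfl | rfl
          · exact Ideal.subset_span (by simp)
          · have h1 : a0 + x ∈ Ideal.span {a0, a0 + x} := Ideal.subset_span (by simp)
            have h2' : a0 ∈ Ideal.span {a0, a0 + x} := Ideal.subset_span (by simp)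
            simpa using sub_mem h1 h2'
        · rw [Ideal.span_le]
          rintro x hx
          simp only [Set.mem_insert_iff, Set.mem_singleton_iff] at hx
          rcases hx with rfl | rfl
          · exact Ideal.subset_span (by simp)
          · exact add_mem (Ideal.subset_span (by simp)) (Ideal.subset_span (by simp))
      have hu' : IsUnit (l0 - l1 + l2) := by
        by_contra hu'
        have hmem : l0 - l1 + l2 ∈ m := (mem_maximalIdeal _).mpr hu'
        have h1m : l1 ∈ m := by
          have : l1 = l0 + l2 - (l0 - l1 + l2) := by ring
          rw [this]
          exact sub_mem (add_mem h0m h2m) hmem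
        exact ((mem_maximalIdeal _).mp h1m) hu1
      refine ⟨a0, a0 + b0, hmm, sq_le_span_singleton a0 (a0 + b0) (l0 - l1 + l2)
        (l1 - 2 * l2) l2 hmm hu' ?_⟩
      have hrw : (l0 - l1 + l2) * (a0 * a0) + (l1 - 2 * l2) * (a0 * (a0 + b0))
          + l2 * ((a0 + b0) * (a0 + b0)) =
          l0 * (a0 * a0) + l1 * (a0 * b0) + l2 * (b0 * b0) := by ring
      rw [hrw]
      exact hrel
  clear hrel hx1 hx2 hx3 hS1 hS2 hm0 hm2 ha0 hb0 hc hd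
  obtain ⟨a, b, hm, hb2⟩ := main
  have hbm : b ∈ m := hm ▸ Ideal.subset_span (by simp)
  have ham : a ∈ m := hm ▸ Ideal.subset_span (by simp)
  -- b ≠ 0
  have hbne : b ≠ 0 := by
    rintro rfl
    have hz : Ideal.span ({(0 : A)} : Set A) = ⊥ := by simp
    have hbot : m * m = ⊥ := le_bot_iff.mp (by rw [hz] at hb2; exact hb2)
    have hmbot : m = ⊥ := by
      rw [eq_bot_iff]
      intro x hx
      have hxx : x * x ∈ (⊥ : Ideal A) := hbot ▸ Ideal.mul_mem_mul hx hx
      simpa [mul_self_eq_zero] using hxx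
    rw [hmdef] at hmbot
    rw [hmdef, hmbot] at hPm
    exact (not_lt_bot hPm)
  -- b ∉ P
  have hbP : b ∉ P := by
    intro hbp
    have hspan : Ideal.span {b} ≤ P := by
      rw [Ideal.span_le]; simpa using hbp
    have hmP : m ≤ P := by
      intro x hx
      have hxx : x * x ∈ P := hspan (hb2 (Ideal.mul_mem_mul hx hx))
      exact (hP.mem_or_mem hxx).elim id id
    exact hPm.not_ge hmP
  -- dichotomy for ideals between (b) and m
  have dich : ∀ J : Ideal A, Ideal.span {b} ≤ J → J ≤ m → J = Ideal.span {b} ∨ J = m := by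
    intro J hbJ hJm
    by_cases hJb : J ≤ Ideal.span {b}
    · exact Or.inl (le_antisymm hJb hbJ)
    · right
      obtain ⟨t, htJ, htb⟩ := SetLike.not_le_iff_exists.mp hJb
      have htm : t ∈ m := hJm htJ
      rw [hm, Ideal.mem_span_pair] at htm
      obtain ⟨r1, s1, hrs⟩ := htm
      have hr1 : IsUnit r1 := by
        by_contra hr1
        have hr1m : r1 ∈ m := (mem_maximalIdeal _).mpr hr1
        apply htb
        have h1 : r1 * a ∈ Ideal.span {b} := hb2 (Ideal.mul_mem_mul hr1m ham)
        have h2' : t = r1 * a + s1 * b := hrs.symm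
        rw [h2']
        exact add_mem h1 (Ideal.mem_span_singleton'.mpr ⟨s1, rfl⟩)
      obtain ⟨w, hw⟩ := hr1
      have haJ : a ∈ J := by
        have h1 : r1 * a ∈ J := by
          have hrw : r1 * a = t - s1 * b := by rw [← hrs]; ring
          rw [hrw]
          exact sub_mem htJ (hbJ (Ideal.mem_span_singleton'.mpr ⟨s1, rfl⟩))
        have h2' : (↑w⁻¹ : A) * (r1 * a) ∈ J := Ideal.mul_mem_left _ _ h1
        rwa [← mul_assoc, show (↑w⁻¹ : A) * r1 = 1 by rw [← hw]; exact w.inv_mul,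
          one_mul] at h2'
      refine le_antisymm hJm ?_
      rw [hm, Ideal.span_le]
      rintro x hx
      simp only [Set.mem_insert_iff, Set.mem_singleton_iff] at hx
      rcases hx with rfl | rfl
      · exact haJ
      · exact hbJ (Ideal.subset_span (by simp))
  -- the decreasing chain
  set F : ℕ → Ideal A := fun n => symbPow P hP n ⊔ Ideal.span {b} with hF
  have hFle : ∀ n, n ≠ 0 → F n ≤ m := by
    intro n hn
    exact sup_le ((symbPow_le_prime hn).trans hPm.le) (Ideal.span_le.mpr (by simpa using hbm))
  have hFdec : ∀ n, F (n + 1) ≤ F n := fun n => sup_le_sup_right symbPow_succ_le _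
  have hbF : ∀ n, Ideal.span {b} ≤ F n := fun n => le_sup_right
  obtain ⟨N, hN0, hFN⟩ : ∃ N, N ≠ 0 ∧ F N = F (N + 1) := by
    by_cases h12 : F 1 = F 2
    · exact ⟨1, one_ne_zero, h12⟩
    · have hF2 : F 2 = Ideal.span {b} := by
        rcases dich (F 2) (hbF 2) (hFle 2 two_ne_zero) with hcase | hcase
        · exact hcase
        · exfalso
          apply h12
          have hm1 : m ≤ F 1 := hcase ▸ hFdec 1
          exact (le_antisymm (hFle 1 one_ne_zero) hm1).trans hcase.symm
      refine ⟨2, two_ne_zero, le_antisymm ?_ (hFdec 2)⟩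
      rw [hF2]
      exact hbF 3
  -- the symbolic powers stabilize
  have hsymb : symbPow P hP N = symbPow P hP (N + 1) := by
    apply le_antisymm ?_ symbPow_succ_le
    have hle1 : symbPow P hP N ≤ symbPow P hP (N + 1) ⊔ m • symbPow P hP N := by
      intro t ht
      have htF : t ∈ F (N + 1) := by
        rw [← hFN, hF]
        exact Submodule.mem_sup_left ht
      obtain ⟨t', ht', w, hwmem, hsum⟩ := Submodule.mem_sup.mp htF
      obtain ⟨cc, hcc⟩ := Ideal.mem_span_singleton'.mp hwmem
      have hwsym : w ∈ symbPow P hP N := by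
        have hrw : w = t - t' := by rw [← hsum]; ring
        rw [hrw]
        exact sub_mem ht (symbPow_succ_le ht')
      have hccsym : cc ∈ symbPow P hP N := by
        apply mul_mem_symbPow hbP
        rw [mul_comm, hcc]
        exact hwsym
      have hrw : t = t' + b * cc := by rw [mul_comm, hcc, hsum]
      rw [hrw]
      exact Submodule.add_mem _ (Submodule.mem_sup_left ht')
        (Submodule.mem_sup_right
          (by rw [smul_eq_mul]; exact Ideal.mul_mem_mul hbm hccsym))
    exact Submodule.le_of_le_smul_of_le_jacobson_bot (IsNoetherian.noetherian _)
      (le_of_eq (IsLocalRing.jacobson_eq_maximalIdeal ⊥ bot_ne_top).symm) hle1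
  -- localize at P and apply Nakayama
  set B := Localization.AtPrime P with hB
  have halg : ∀ x ∈ P ^ N,
      algebraMap A B x ∈ Ideal.map (algebraMap A B) (P ^ (N + 1)) := by
    intro x hx
    have hx' : x ∈ symbPow P hP (N + 1) := hsymb ▸ pow_le_symbPow hx
    obtain ⟨s, hs, hsx⟩ := hx'
    have hu : IsUnit (algebraMap A B s) :=
      IsLocalization.map_units B (⟨s, hs⟩ : P.primeCompl)
    obtain ⟨w, hw⟩ := hu
    have h1 : algebraMap A B (s * x) ∈ Ideal.map (algebraMap A B) (P ^ (N + 1)) :=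
      Ideal.mem_map_of_mem _ hsx
    have hrw : algebraMap A B x = (↑w⁻¹ : B) * algebraMap A B (s * x) := by
      rw [_root_.map_mul, ← hw, ← mul_assoc, Units.inv_mul, one_mul]
    rw [hrw]
    exact Ideal.mul_mem_left _ _ h1
  have hMP : Ideal.map (algebraMap A B) (P ^ N) = ⊥ := by
    apply Submodule.eq_bot_of_le_smul_of_le_jacobson_bot (maximalIdeal B) _
      (Ideal.FG.map (IsNoetherian.noetherian (P ^ N)) _)
    · calc Ideal.map (algebraMap A B) (P ^ N)
          ≤ Ideal.map (algebraMap A B) (P ^ (N + 1)) := by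
            rw [Ideal.map_le_iff_le_comap]
            intro x hx
            exact Ideal.mem_comap.mpr (halg x hx)
        _ = Ideal.map (algebraMap A B) (P ^ N * P) := by rw [pow_succ]
        _ = Ideal.map (algebraMap A B) (P ^ N) * Ideal.map (algebraMap A B) P :=
            Ideal.map_mul _ _ _
        _ = maximalIdeal B • Ideal.map (algebraMap A B) (P ^ N) := by
            rw [Localization.AtPrime.map_eq_maximalIdeal, smul_eq_mul, mul_comm]
    · exact (IsLocalRing.jacobson_eq_maximalIdeal ⊥ bot_ne_top).ge
  obtain ⟨x, hxP, hx0⟩ := (Submodule.ne_bot_iff P).mp h0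
  have hximg : algebraMap A B (x ^ N) = 0 := by
    have hmem := Ideal.mem_map_of_mem (algebraMap A B) (Ideal.pow_mem_pow hxP N)
    rw [hMP] at hmem
    simpa using hmem
  obtain ⟨s, hs⟩ := (IsLocalization.map_eq_zero_iff P.primeCompl B _).mp hximg
  have hs0 : (s : A) ≠ 0 := fun hzero => s.2 (by rw [hzero]; exact P.zero_mem)
  have hxN : x ^ N = 0 := by
    rcases mul_eq_zero.mp hs with hcase | hcase
    · exact absurd hcase hs0
    · exact hcase
  exact hx0 (pow_eq_zero_iff hN0 |>.mp hxN)

end LocalCase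

/-- If every ideal of a commutative Noetherian domain (not a field) is generated by two
elements, then the Krull dimension of the ring is at most 1. -/
theorem krullDim_le_one_of_two_generated (R : Type*) [CommRing R] [IsDomain R]
    [IsNoetherianRing R] (hnf : ¬ IsField R)
    (h : ∀ I : Ideal R, ∃ a b : R, I = Ideal.span {a, b}) :
    ringKrullDim R ≤ 1 := by
  rw [ringKrullDim, Order.krullDim]
  apply iSup_le
  intro p
  suffices hlen : p.length ≤ 1 by exact_mod_cast hlen
  by_contra hlen
  push_neg at hlen
  have h2len : 2 ≤ p.length := hlen
  -- extract a chain of three primes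
  have h01 : p ⟨0, by omega⟩ < p ⟨1, by omega⟩ := p.strictMono (Fin.mk_lt_mk.mpr (by omega))
  have h12 : p ⟨1, by omega⟩ < p ⟨2, by omega⟩ := p.strictMono (Fin.mk_lt_mk.mpr (by omega))
  set q := (p ⟨2, by omega⟩).asIdeal with hq
  set p1 := (p ⟨1, by omega⟩).asIdeal with hp1
  set p0 := (p ⟨0, by omega⟩).asIdeal with hp0
  haveI hqP : q.IsPrime := (p ⟨2, by omega⟩).isPrime
  haveI hp1P : p1.IsPrime := (p ⟨1, by omega⟩).isPrime
  have h01' : p0 < p1 := (PrimeSpectrum.asIdeal_lt_asIdeal _ _).mpr h01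
  have h12' : p1 < q := (PrimeSpectrum.asIdeal_lt_asIdeal _ _).mpr h12
  have hp1ne : p1 ≠ ⊥ := by
    intro hbot
    rw [hbot] at h01'
    exact (not_lt_bot h01')
  -- localize at q
  set A := Localization.AtPrime q with hA
  haveI : IsNoetherianRing A := IsLocalization.isNoetherianRing q.primeCompl A inferInstance
  haveI : IsDomain A := IsLocalization.isDomain_of_local_atPrime hqP
  have h2A : ∀ I : Ideal A, ∃ x y : A, I = Ideal.span {x, y} := by
    intro I
    obtain ⟨x, y, hxy⟩ := h (I.comap (algebraMap R A))
    refine ⟨algebraMap R A x, algebraMap R A y, ?_⟩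
    conv_lhs => rw [← IsLocalization.map_comap q.primeCompl A I]
    change Ideal.map (algebraMap R A) (I.comap (algebraMap R A)) = _
    rw [hxy, Ideal.map_span]
    congr 1
    simp [Set.image_insert_eq]
  set J := Ideal.map (algebraMap R A) p1 with hJ
  have hdisj : Disjoint (q.primeCompl : Set R) (p1 : Set R) :=
    Set.disjoint_left.mpr fun x hx hx' => hx (h12'.le hx')
  haveI hJP : J.IsPrime :=
    IsLocalization.isPrime_of_isPrime_disjoint q.primeCompl A p1 hp1P hdisj
  have hcomap : J.comap (algebraMap R A) = p1 :=
    IsLocalization.comap_map_of_isPrime_disjoint q.primeCompl A hp1P hdisj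
  have hinj : Function.Injective (algebraMap R A) :=
    IsLocalization.injective A q.primeCompl_le_nonZeroDivisors
  have hJne : J ≠ ⊥ := by
    intro hbot
    apply hp1ne
    rw [eq_bot_iff]
    intro x hx
    have : algebraMap R A x ∈ J := Ideal.mem_map_of_mem _ hx
    rw [hbot] at this
    have hx0 : algebraMap R A x = 0 := by simpa using this
    have : x = 0 := hinj (by simpa using hx0)
    simpa [this]
  have hJlt : J < IsLocalRing.maximalIdeal A := by
    rw [← Localization.AtPrime.map_eq_maximalIdeal]
    refine lt_of_le_of_ne (Ideal.map_mono h12'.le) ?_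
    intro heq
    apply h12'.ne
    have hdisj' : Disjoint (q.primeCompl : Set R) (q : Set R) :=
      Set.disjoint_left.mpr fun x hx hx' => hx hx'
    have hcomap' : (Ideal.map (algebraMap R A) q).comap (algebraMap R A) = q :=
      IsLocalization.comap_map_of_isPrime_disjoint q.primeCompl A hqP hdisj'
    rw [← hcomap, heq, hcomap']
  exact local_case A h2A J hJP hJne hJlt
end

section
/- If the endomorphism ring of a right R-module M has stable range 1, then M is cancellable: for all right R-modules P and Q, M ⊕ P ≅ M ⊕ Q implies P ≅ Q. -/
universe u

/-- Evans's cancellation theorem: if `End_R M` has stable range 1 then `M` is cancellable. -/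
theorem evans_cancellation (R : Type u) [Ring R] (M : Type u) [AddCommGroup M] [Module R M]
    (h : ∀ a b : Module.End R M, (∃ x y : Module.End R M, a * x + b * y = 1) →
      ∃ x : Module.End R M, IsUnit (a + b * x)) :
    ∀ (P Q : Type u) [AddCommGroup P] [Module R P] [AddCommGroup Q] [Module R Q],
      Nonempty ((M × P) ≃ₗ[R] (M × Q)) → Nonempty (P ≃ₗ[R] Q) := by
  rintro P Q _ _ _ _ ⟨f⟩
  -- components of f and f.symm
  set a : Module.End R M := (LinearMap.fst R M Q) ∘ₗ f.toLinearMap ∘ₗ (LinearMap.inl R M P)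
    with ha
  set g : P →ₗ[R] M := (LinearMap.fst R M Q) ∘ₗ f.toLinearMap ∘ₗ (LinearMap.inr R M P) with hg
  set x : Module.End R M := (LinearMap.fst R M P) ∘ₗ f.symm.toLinearMap ∘ₗ (LinearMap.inl R M Q)
    with hx
  set y : M →ₗ[R] P := (LinearMap.snd R M P) ∘ₗ f.symm.toLinearMap ∘ₗ (LinearMap.inl R M Q)
    with hy
  have hfst : ∀ (m : M) (p : P), (f (m, p)).1 = a m + g p := by
    intro m p
    have : (m, p) = ((m, 0) + (0, p) : M × P) := by simp
    rw [this, map_add]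
    rfl
  have key : a * x + (g ∘ₗ y) * 1 = 1 := by
    ext m
    have h1 : f.symm (m, 0) = (x m, y m) := rfl
    have h2 : (f (f.symm (m, 0))).1 = m := by rw [f.apply_symm_apply]
    simp only [Module.End.mul_apply, LinearMap.add_apply, Module.End.one_apply,
      LinearMap.coe_comp, Function.comp_apply] at *
    rw [h1, hfst] at h2
    simpa using h2
  obtain ⟨z, hu⟩ := h a (g ∘ₗ y) ⟨x, 1, key⟩
  obtain ⟨u, huval⟩ := hu
  set s : M →ₗ[R] P := y ∘ₗ z with hs
  have hus : ∀ m : M, (u : Module.End R M) m = a m + g (s m) := by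
    intro m
    rw [huval]
    rfl
  -- automorphism pieces of M × P
  set E2 : M ≃ₗ[R] M := LinearEquiv.ofLinear (u : Module.End R M) (↑u⁻¹ : Module.End R M)
    (by rw [← Module.End.mul_eq_comp, u.mul_inv]; rfl)
    (by rw [← Module.End.mul_eq_comp, u.inv_mul]; rfl) with hE2
  set θ₁ : (M × P) ≃ₗ[R] (M × P) := LinearEquiv.ofLinear
    (LinearMap.prod (LinearMap.fst R M P) (s ∘ₗ LinearMap.fst R M P + LinearMap.snd R M P))
    (LinearMap.prod (LinearMap.fst R M P) (LinearMap.snd R M P - s ∘ₗ LinearMap.fst R M P))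
    (by apply LinearMap.ext; rintro ⟨m, p⟩; simp)
    (by apply LinearMap.ext; rintro ⟨m, p⟩; simp) with hθ₁
  set θ₂ : (M × P) ≃ₗ[R] (M × P) := E2.symm.prodCongr (LinearEquiv.refl R P) with hθ₂
  set θ₃ : (M × P) ≃ₗ[R] (M × P) := LinearEquiv.ofLinear
    (LinearMap.prod (LinearMap.fst R M P - g ∘ₗ LinearMap.snd R M P) (LinearMap.snd R M P))
    (LinearMap.prod (LinearMap.fst R M P + g ∘ₗ LinearMap.snd R M P) (LinearMap.snd R M P))
    (by apply LinearMap.ext; rintro ⟨m, p⟩; simp)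
    (by apply LinearMap.ext; rintro ⟨m, p⟩; simp) with hθ₃
  set F : (M × P) ≃ₗ[R] (M × Q) := θ₃.trans (θ₂.trans (θ₁.trans f)) with hF_def
  have hF : ∀ w : M × P, (F w).1 = w.1 := by
    rintro ⟨m, p⟩
    have e3 : θ₃ (m, p) = (m - g p, p) := rfl
    have e2 : θ₂ (m - g p, p) = (E2.symm (m - g p), p) := rfl
    set n : M := E2.symm (m - g p) with hn
    have e1 : θ₁ (n, p) = (n, s n + p) := rfl
    have : F (m, p) = f (n, s n + p) := by
      rw [hF_def]
      simp only [LinearEquiv.trans_apply]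
      rw [e3, e2, e1]
    rw [this, hfst]
    have hEn : E2 n = m - g p := E2.apply_symm_apply _
    have hE2u : E2 n = a n + g (s n) := by
      rw [hE2, LinearEquiv.ofLinear_apply, hus]
    rw [map_add]
    have : a n + (g (s n) + g p) = (a n + g (s n)) + g p := by abel
    rw [this, ← hE2u, hEn]
    simp
  have hF' : ∀ w : M × Q, (F.symm w).1 = w.1 := by
    intro w
    have := hF (F.symm w)
    rw [F.apply_symm_apply] at this
    exact this.symm
  refine ⟨LinearEquiv.ofLinear
    ((LinearMap.snd R M Q) ∘ₗ F.toLinearMap ∘ₗ (LinearMap.inr R M P))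
    ((LinearMap.snd R M P) ∘ₗ F.symm.toLinearMap ∘ₗ (LinearMap.inr R M Q)) ?_ ?_⟩
  · apply LinearMap.ext
    intro q
    have e1 : ((0 : M), (F.symm (0, q)).2) = F.symm (0, q) :=
      Prod.ext (hF' (0, q)).symm rfl
    simp only [LinearMap.coe_comp, Function.comp_apply, LinearMap.inr_apply,
      LinearEquiv.coe_coe, LinearMap.id_apply, LinearMap.snd_apply]
    rw [e1, F.apply_symm_apply]
  · apply LinearMap.ext
    intro p
    have e1 : ((0 : M), (F (0, p)).2) = F (0, p) :=
      Prod.ext (hF (0, p)).symm rfl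
    simp only [LinearMap.coe_comp, Function.comp_apply, LinearMap.inr_apply,
      LinearEquiv.coe_coe, LinearMap.id_apply, LinearMap.snd_apply]
    rw [e1, F.symm_apply_apply]
end

section
/- A von Neumann regular ring R is unit-regular if and only if for all x, y in R, xR ≅ yR as right R-modules implies R/xR ≅ R/yR as right R-modules. -/
universe u
open MulOpposite Submodule
variable {R : Type u} [Ring R]

lemma mem_span_mop {s x : R} : x ∈ span Rᵐᵒᵖ ({s} : Set R) ↔ ∃ r : R, s * r = x := by
  rw [Submodule.mem_span_singleton]
  constructor
  · rintro ⟨a, rfl⟩; exact ⟨a.unop, rfl⟩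
  · rintro ⟨r, rfl⟩; exact ⟨op r, rfl⟩

lemma span_mop_eq {s t : R} (h1 : s ∈ span Rᵐᵒᵖ ({t} : Set R))
    (h2 : t ∈ span Rᵐᵒᵖ ({s} : Set R)) :
    span Rᵐᵒᵖ ({s} : Set R) = span Rᵐᵒᵖ ({t} : Set R) := by
  apply le_antisymm <;> rw [span_le, Set.singleton_subset_iff] <;> assumption

lemma idem_compl {p : R} (hp : p * p = p) : (1 - p) * (1 - p) = 1 - p := by
  calc (1 - p) * (1 - p) = 1 - p - p + p * p := by noncomm_ring
  _ = 1 - p := by rw [hp]; abel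

noncomputable def spanEquiv (s t w w' : R) (h1 : w' * (w * s) = s) (h2 : w * (w' * t) = t)
    (hws : w * s ∈ span Rᵐᵒᵖ ({t} : Set R)) (hwt : w' * t ∈ span Rᵐᵒᵖ ({s} : Set R)) :
    (span Rᵐᵒᵖ ({s} : Set R)) ≃ₗ[Rᵐᵒᵖ] (span Rᵐᵒᵖ ({t} : Set R)) where
  toFun z := ⟨w * z.1, by
    obtain ⟨r, hr⟩ := mem_span_mop.1 z.2
    obtain ⟨r', hr'⟩ := mem_span_mop.1 hws
    exact mem_span_mop.2 ⟨r' * r, by rw [← hr, ← mul_assoc, hr', mul_assoc]⟩⟩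
  invFun z := ⟨w' * z.1, by
    obtain ⟨r, hr⟩ := mem_span_mop.1 z.2
    obtain ⟨r', hr'⟩ := mem_span_mop.1 hwt
    exact mem_span_mop.2 ⟨r' * r, by rw [← hr, ← mul_assoc, hr', mul_assoc]⟩⟩
  map_add' z1 z2 := by ext; simp [mul_add]
  map_smul' m z := by ext; simp [mul_assoc]
  left_inv z := by
    ext
    obtain ⟨r, hr⟩ := mem_span_mop.1 z.2
    simp only [← hr, ← mul_assoc]
    rw [mul_assoc w' w s, h1]
  right_inv z := by
    ext
    obtain ⟨r, hr⟩ := mem_span_mop.1 z.2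
    simp only [← hr, ← mul_assoc]
    rw [mul_assoc w w' t, h2]

noncomputable def quotIdem (p : R) (hp : p * p = p) :
    (R ⧸ (span Rᵐᵒᵖ ({p} : Set R) : Submodule Rᵐᵒᵖ R)) ≃ₗ[Rᵐᵒᵖ]
      (span Rᵐᵒᵖ ({1 - p} : Set R) : Submodule Rᵐᵒᵖ R) := by
  let f : R →ₗ[Rᵐᵒᵖ] (span Rᵐᵒᵖ ({1 - p} : Set R) : Submodule Rᵐᵒᵖ R) :=
  { toFun := fun r => ⟨(1 - p) * r, mem_span_mop.2 ⟨r, rfl⟩⟩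
    map_add' := fun r s => by ext; simp [mul_add]
    map_smul' := fun m r => by ext; simp [mul_assoc] }
  have hsurj : Function.Surjective f := by
    rintro ⟨z, hz⟩
    obtain ⟨r, hr⟩ := mem_span_mop.1 hz
    refine ⟨z, ?_⟩
    ext
    show (1 - p) * z = z
    rw [← hr, ← mul_assoc, idem_compl hp]
  have hker : LinearMap.ker f = span Rᵐᵒᵖ ({p} : Set R) := by
    ext r
    simp only [LinearMap.mem_ker]
    constructor
    · intro h
      have h0 : (1 - p) * r = 0 := congrArg Subtype.val h
      rw [sub_mul, one_mul] at h0
      exact mem_span_mop.2 ⟨r, (sub_eq_zero.1 h0).symm⟩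
    · intro h
      obtain ⟨r', hr'⟩ := mem_span_mop.1 h
      ext
      show (1 - p) * r = 0
      rw [← hr', ← mul_assoc, sub_mul, one_mul, hp, sub_self, zero_mul]
  exact (Submodule.quotEquivOfEq _ _ hker.symm).trans (f.quotKerEquivOfSurjective hsurj)

lemma exists_conj {s t : R} (hs : s * s = s) (ht : t * t = t)
    (ψ : (span Rᵐᵒᵖ ({s} : Set R)) ≃ₗ[Rᵐᵒᵖ] (span Rᵐᵒᵖ ({t} : Set R))) :
    ∃ a b : R, b * a = s ∧ a * b = t ∧ a * s = a ∧ t * a = a ∧ s * b = b ∧ b * t = b := by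
  have hss : s ∈ span Rᵐᵒᵖ ({s} : Set R) := mem_span_singleton_self s
  have htt : t ∈ span Rᵐᵒᵖ ({t} : Set R) := mem_span_singleton_self t
  set a : R := (ψ ⟨s, hss⟩ : R) with ha
  set b : R := (ψ.symm ⟨t, htt⟩ : R) with hb
  have hat : a ∈ span Rᵐᵒᵖ ({t} : Set R) := (ψ ⟨s, hss⟩).2
  have hbs : b ∈ span Rᵐᵒᵖ ({s} : Set R) := (ψ.symm ⟨t, htt⟩).2
  have hta : t * a = a := by
    obtain ⟨r, hr⟩ := mem_span_mop.1 hat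
    rw [← hr, ← mul_assoc, ht]
  have hsb : s * b = b := by
    obtain ⟨r, hr⟩ := mem_span_mop.1 hbs
    rw [← hr, ← mul_assoc, hs]
  have has : a * s = a := by
    have h1 : (⟨s, hss⟩ : span Rᵐᵒᵖ ({s} : Set R)) = (op s) • ⟨s, hss⟩ := by
      ext; show s = s * s; exact hs.symm
    have h2 : ψ ⟨s, hss⟩ = (op s) • ψ ⟨s, hss⟩ := by
      conv_lhs => rw [h1]
      exact map_smul ψ _ _
    exact (congrArg Subtype.val h2).symm
  have hba : b * a = s := by
    have h1 : (⟨a, hat⟩ : span Rᵐᵒᵖ ({t} : Set R)) = (op a) • ⟨t, htt⟩ := by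
      ext; show a = t * a; exact hta.symm
    have h2 : ψ.symm ⟨a, hat⟩ = ⟨s, hss⟩ := by
      rw [show (⟨a, hat⟩ : span Rᵐᵒᵖ ({t} : Set R)) = ψ ⟨s, hss⟩ from rfl]
      exact ψ.symm_apply_apply _
    rw [h1, map_smul] at h2
    exact congrArg Subtype.val h2
  have hab : a * b = t := by
    have h1 : (⟨b, hbs⟩ : span Rᵐᵒᵖ ({s} : Set R)) = (op b) • ⟨s, hss⟩ := by
      ext; show b = s * b; exact hsb.symm
    have h2 : ψ ⟨b, hbs⟩ = ⟨t, htt⟩ := by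
      rw [show (⟨b, hbs⟩ : span Rᵐᵒᵖ ({s} : Set R)) = ψ.symm ⟨t, htt⟩ from rfl]
      exact ψ.apply_symm_apply _
    rw [h1, map_smul] at h2
    exact congrArg Subtype.val h2
  have hbt : b * t = b := by
    have h1 : (⟨t, htt⟩ : span Rᵐᵒᵖ ({t} : Set R)) = (op t) • ⟨t, htt⟩ := by
      ext; show t = t * t; exact ht.symm
    have h2 : ψ.symm ⟨t, htt⟩ = (op t) • ψ.symm ⟨t, htt⟩ := by
      conv_lhs => rw [h1]
      exact map_smul ψ.symm _ _
    exact (congrArg Subtype.val h2).symm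
  exact ⟨a, b, hba, hab, has, hta, hsb, hbt⟩
/-- A von Neumann regular ring is unit-regular iff isomorphic principal right ideals have
isomorphic complements: `xR ≅ yR` implies `R/xR ≅ R/yR` (as right `R`-modules). -/
theorem unitRegular_iff_internal_cancellation (R : Type u) [Ring R]
    (hvnr : ∀ a : R, ∃ b : R, a * b * a = a) :
    (∀ a : R, ∃ u : Rˣ, a * u * a = a) ↔
      (∀ x y : R,
        Nonempty ((Submodule.span Rᵐᵒᵖ {x} : Submodule Rᵐᵒᵖ R) ≃ₗ[Rᵐᵒᵖ]
          (Submodule.span Rᵐᵒᵖ {y} : Submodule Rᵐᵒᵖ R)) →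
        Nonempty ((R ⧸ (Submodule.span Rᵐᵒᵖ {x} : Submodule Rᵐᵒᵖ R)) ≃ₗ[Rᵐᵒᵖ]
          (R ⧸ (Submodule.span Rᵐᵒᵖ {y} : Submodule Rᵐᵒᵖ R)))) := by
  constructor
  · -- unit-regular → cancellation
    rintro hur x y ⟨φ⟩
    obtain ⟨b, hb⟩ := hvnr x
    obtain ⟨c, hc⟩ := hvnr y
    have hee : (x * b) * (x * b) = x * b := by rw [← mul_assoc, hb]
    have hff : (y * c) * (y * c) = y * c := by rw [← mul_assoc, hc]
    have hxe : Submodule.span Rᵐᵒᵖ ({x} : Set R) = Submodule.span Rᵐᵒᵖ ({x * b} : Set R) :=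
      span_mop_eq (mem_span_mop.2 ⟨x, hb⟩) (mem_span_mop.2 ⟨b, rfl⟩)
    have hyf : Submodule.span Rᵐᵒᵖ ({y} : Set R) = Submodule.span Rᵐᵒᵖ ({y * c} : Set R) :=
      span_mop_eq (mem_span_mop.2 ⟨y, hc⟩) (mem_span_mop.2 ⟨c, rfl⟩)
    have φ' : (Submodule.span Rᵐᵒᵖ ({x * b} : Set R)) ≃ₗ[Rᵐᵒᵖ]
        (Submodule.span Rᵐᵒᵖ ({y * c} : Set R)) :=
      (LinearEquiv.ofEq _ _ hxe.symm).trans (φ.trans (LinearEquiv.ofEq _ _ hyf))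
    obtain ⟨a, d, hda, had, hae, hfa, hed, hdf⟩ := exists_conj hee hff φ'
    obtain ⟨u, hu⟩ := hur a
    have hu' : a * (↑u * a) = a := by rw [← mul_assoc]; exact hu
    -- g = ↑u * a, h = a * ↑u
    have hgg : (↑u * a) * ((↑u:R) * a) = ↑u * a := by
      calc (↑u * a) * ((↑u:R) * a) = ↑u * (a * (↑u * a)) := by noncomm_ring
      _ = ↑u * a := by rw [hu']
    have hhh : (a * ↑u) * (a * (↑u:R)) = a * ↑u := by
      calc (a * ↑u) * (a * (↑u:R)) = (a * (↑u * a)) * ↑u := by noncomm_ring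
      _ = a * ↑u := by rw [hu']
    have hge : (↑u * a) * (x * b) = ↑u * a := by rw [mul_assoc, hae]
    have heug : (x * b) * ((↑u:R) * a) = x * b := by
      rw [← hda]
      calc (d * a) * ((↑u:R) * a) = d * (a * (↑u * a)) := by noncomm_ring
      _ = d * a := by rw [hu']
    have heg : Submodule.span Rᵐᵒᵖ ({1 - x * b} : Set R)
        = Submodule.span Rᵐᵒᵖ ({1 - ↑u * a} : Set R) := by
      refine span_mop_eq (mem_span_mop.2 ⟨1 - x * b, ?_⟩) (mem_span_mop.2 ⟨1 - ↑u * a, ?_⟩)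
      · calc (1 - ↑u * a) * (1 - x * b)
            = 1 - x * b - ↑u * a + (↑u * a) * (x * b) := by noncomm_ring
        _ = 1 - x * b := by rw [hge]; abel
      · calc (1 - x * b) * (1 - ↑u * a)
            = 1 - ↑u * a - x * b + (x * b) * ((↑u:R) * a) := by noncomm_ring
        _ = 1 - ↑u * a := by rw [heug]; abel
    have sp1 : (Submodule.span Rᵐᵒᵖ ({1 - ↑u * a} : Set R)) ≃ₗ[Rᵐᵒᵖ]
        (Submodule.span Rᵐᵒᵖ ({1 - a * ↑u} : Set R)) := by
      refine spanEquiv _ _ (↑u⁻¹) (↑u) (Units.mul_inv_cancel_left u _)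
        (Units.inv_mul_cancel_left u _) (mem_span_mop.2 ⟨↑u⁻¹, ?_⟩) (mem_span_mop.2 ⟨↑u, ?_⟩)
      · calc (1 - a * ↑u) * (↑u⁻¹:R) = ↑u⁻¹ - a * (↑u * ↑u⁻¹) := by noncomm_ring
        _ = ↑u⁻¹ - (↑u⁻¹ * ↑u) * a := by
            rw [Units.mul_inv, Units.inv_mul, mul_one, one_mul]
        _ = (↑u⁻¹:R) * (1 - ↑u * a) := by noncomm_ring
      · calc (1 - ↑u * a) * (↑u:R) = ↑u - ↑u * (a * ↑u) := by noncomm_ring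
        _ = (↑u:R) * (1 - a * ↑u) := by noncomm_ring
    have hhf : Submodule.span Rᵐᵒᵖ ({a * ↑u} : Set R)
        = Submodule.span Rᵐᵒᵖ ({y * c} : Set R) := by
      refine span_mop_eq (mem_span_mop.2 ⟨a * ↑u, ?_⟩) (mem_span_mop.2 ⟨y * c, ?_⟩)
      · rw [← mul_assoc, hfa]
      · rw [← had]
        calc (a * ↑u) * (a * d) = (a * (↑u * a)) * d := by noncomm_ring
        _ = a * d := by rw [hu']
    exact ⟨(Submodule.quotEquivOfEq _ _ hxe).trans <| (quotIdem _ hee).trans <|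
      (LinearEquiv.ofEq _ _ heg).trans <| sp1.trans <| (quotIdem _ hhh).symm.trans <|
      Submodule.quotEquivOfEq _ _ (hhf.trans hyf.symm)⟩
  · -- cancellation → unit-regular
    intro hcan a
    obtain ⟨b, hb⟩ := hvnr a
    have hb' : a * (b * a) = a := by rw [← mul_assoc]; exact hb
    have hee : (a * b) * (a * b) = a * b := by rw [← mul_assoc, hb]
    have hff : (b * a) * (b * a) = b * a := by
      calc (b * a) * (b * a) = b * (a * (b * a)) := by noncomm_ring
      _ = b * a := by rw [hb']
    have iso0 : (Submodule.span Rᵐᵒᵖ ({a} : Set R)) ≃ₗ[Rᵐᵒᵖ]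
        (Submodule.span Rᵐᵒᵖ ({b * a} : Set R)) :=
      spanEquiv a (b * a) b a hb' (by rw [hb'])
        (Submodule.mem_span_singleton_self _) (by rw [hb']; exact Submodule.mem_span_singleton_self _)
    obtain ⟨Q⟩ := hcan a (b * a) ⟨iso0⟩
    have hea : Submodule.span Rᵐᵒᵖ ({a * b} : Set R) = Submodule.span Rᵐᵒᵖ ({a} : Set R) :=
      span_mop_eq (mem_span_mop.2 ⟨b, rfl⟩) (mem_span_mop.2 ⟨a, hb⟩)
    have τ : (Submodule.span Rᵐᵒᵖ ({1 - a * b} : Set R)) ≃ₗ[Rᵐᵒᵖ]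
        (Submodule.span Rᵐᵒᵖ ({1 - b * a} : Set R)) :=
      (quotIdem _ hee).symm.trans ((Submodule.quotEquivOfEq _ _ hea).trans
        (Q.trans (quotIdem _ hff)))
    obtain ⟨c, d, hdc, hcd, hcs, htc, hsd, hdt⟩ := exists_conj (idem_compl hee) (idem_compl hff) τ
    -- v = b*(a*b) + c*(1-a*b), v' = a + d*(1-b*a)
    have t1 : a * (b * (a * b)) = a * b := by
      calc a * (b * (a * b)) = (a * (b * a)) * b := by noncomm_ring
      _ = a * b := by rw [hb']
    have hac : a * c = 0 := by
      calc a * c = a * ((1 - b * a) * c) := by rw [htc]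
      _ = (a - a * (b * a)) * c := by noncomm_ring
      _ = 0 := by rw [hb', sub_self, zero_mul]
    have t2 : a * (c * (1 - a * b)) = 0 := by rw [← mul_assoc, hac, zero_mul]
    have k3 : (1 - b * a) * (b * (a * b)) = 0 := by
      calc (1 - b * a) * (b * (a * b)) = b * (a * b) - b * ((a * (b * a)) * b) := by noncomm_ring
      _ = 0 := by rw [hb']; abel
    have t3 : (d * (1 - b * a)) * (b * (a * b)) = 0 := by
      rw [mul_assoc, k3, mul_zero]
    have t4 : (d * (1 - b * a)) * (c * (1 - a * b)) = 1 - a * b := by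
      calc (d * (1 - b * a)) * (c * (1 - a * b)) = (d * ((1 - b * a) * c)) * (1 - a * b) := by
            noncomm_ring
      _ = (d * c) * (1 - a * b) := by rw [htc]
      _ = 1 - a * b := by rw [hdc, idem_compl hee]
    have s1 : (b * (a * b)) * a = b * a := by
      calc (b * (a * b)) * a = b * (a * b * a) := by noncomm_ring
      _ = b * a := by rw [hb]
    have k2 : (b * (a * b)) * (1 - a * b) = 0 := by
      calc (b * (a * b)) * (1 - a * b) = b * (a * b) - b * ((a * b * a) * b) := by noncomm_ring
      _ = 0 := by rw [hb]; abel
    have s2 : (b * (a * b)) * (d * (1 - b * a)) = 0 := by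
      rw [← hsd]
      calc (b * (a * b)) * (((1 - a * b) * d) * (1 - b * a))
          = ((b * (a * b)) * (1 - a * b)) * (d * (1 - b * a)) := by noncomm_ring
      _ = 0 := by rw [k2, zero_mul]
    have s3 : (c * (1 - a * b)) * a = 0 := by
      calc (c * (1 - a * b)) * a = c * (a - a * b * a) := by noncomm_ring
      _ = 0 := by rw [hb, sub_self, mul_zero]
    have s4 : (c * (1 - a * b)) * (d * (1 - b * a)) = 1 - b * a := by
      calc (c * (1 - a * b)) * (d * (1 - b * a)) = ((c * (1 - a * b)) * d) * (1 - b * a) := by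
            noncomm_ring
      _ = (c * d) * (1 - b * a) := by rw [hcs]
      _ = 1 - b * a := by rw [hcd, idem_compl hff]
    have hvv' : (b * (a * b) + c * (1 - a * b)) * (a + d * (1 - b * a)) = 1 := by
      rw [mul_add, add_mul, add_mul, s1, s2, s3, s4]
      noncomm_ring
    have hv'v : (a + d * (1 - b * a)) * (b * (a * b) + c * (1 - a * b)) = 1 := by
      rw [mul_add, add_mul, add_mul, t1, t2, t3, t4]
      noncomm_ring
    refine ⟨⟨b * (a * b) + c * (1 - a * b), a + d * (1 - b * a), hvv', hv'v⟩, ?_⟩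
    show a * (b * (a * b) + c * (1 - a * b)) * a = a
    calc a * (b * (a * b) + c * (1 - a * b)) * a
        = (a * (b * (a * b)) + a * (c * (1 - a * b))) * a := by rw [mul_add]
    _ = (a * b + 0) * a := by rw [t1, t2]
    _ = a := by rw [add_zero]; exact hb
end

section
/- A unit-regular ring has stable range 1. -/
/-- A unit-regular ring has stable range 1. -/
theorem unitRegular_stableRange1 (R : Type*) [Ring R]
    (h : ∀ a : R, ∃ u : Rˣ, a * u * a = a) :
    ∀ a b : R, (∃ x y : R, a * x + b * y = 1) → ∃ x : R, IsUnit (a + b * x) := by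
  rintro a b ⟨x, y, hxy⟩
  obtain ⟨u, hu⟩ := h a
  obtain ⟨e, he_def⟩ : ∃ e : R, e = a * u := ⟨_, rfl⟩
  obtain ⟨f, hf_def⟩ : ∃ f : R, f = 1 - e := ⟨_, rfl⟩
  obtain ⟨z, hz_def⟩ : ∃ z : R, z = b * y := ⟨_, rfl⟩
  have hee : e * e = e := by
    rw [he_def]
    calc a * ↑u * (a * ↑u) = (a * ↑u * a) * ↑u := by noncomm_ring
      _ = a * ↑u := by rw [hu]
  have heax : e * (a * x) = a * x := by
    rw [he_def]
    calc a * ↑u * (a * x) = (a * ↑u * a) * x := by noncomm_ring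
      _ = a * x := by rw [hu]
  have hby : z = 1 - a * x := by rw [hz_def, ← hxy]; noncomm_ring
  have hfz : f * z = f := by
    rw [hf_def, hby]
    calc (1 - e) * (1 - a * x) = 1 - a * x - e + e * (a * x) := by noncomm_ring
      _ = 1 - a * x - e + a * x := by rw [heax]
      _ = 1 - e := by noncomm_ring
  have hef : e * f = 0 := by rw [hf_def, mul_sub, mul_one, hee, sub_self]
  have hfe : f * e = 0 := by rw [hf_def, sub_mul, one_mul, hee, sub_self]
  have hff : f * f = f := by
    rw [hf_def]
    calc (1 - e) * (1 - e) = 1 - e - (e - e * e) := by noncomm_ring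
      _ = 1 - e := by rw [hee]; noncomm_ring
  have hfzf : f * (z * f) = f := by rw [← mul_assoc, hfz, hff]
  have p1 : (e + z * f) * (e - e * z * f + f) = 1 := by
    have key : z * f - e * (z * f) = f := by
      calc z * f - e * (z * f) = (1 - e) * (z * f) := by noncomm_ring
        _ = f * (z * f) := by rw [← hf_def]
        _ = f := hfzf
    calc (e + z * f) * (e - e * z * f + f)
        = e*e - (e*e)*(z*f) + e*f + (z*(f*e)) - z*((f*e)*(z*f)) + z*(f*f) := by noncomm_ring
      _ = e - e*(z*f) + 0 + z*0 - z*(0*(z*f)) + z*f := by rw [hee, hef, hfe, hff]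
      _ = e + (z*f - e*(z*f)) := by noncomm_ring
      _ = e + f := by rw [key]
      _ = 1 := by rw [hf_def]; noncomm_ring
  have p2 : (e - e * z * f + f) * (e + z * f) = 1 := by
    calc (e - e * z * f + f) * (e + z * f)
        = e*e + e*(z*f) - (e*z)*(f*e) - (e*z)*(f*(z*f)) + f*e + (f*z)*f := by noncomm_ring
      _ = e + e*(z*f) - (e*z)*0 - (e*z)*f + 0 + f*f := by rw [hee, hfe, hfzf, hfz]
      _ = e + e*(z*f) - e*(z*f) + f*f := by noncomm_ring
      _ = e + f := by rw [hff]; noncomm_ring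
      _ = 1 := by rw [hf_def]; noncomm_ring
  have hw : IsUnit (e + z * f) := ⟨⟨e + z * f, e - e * z * f + f, p1, p2⟩, rfl⟩
  refine ⟨y * (1 - a * u) * ↑u⁻¹, ?_⟩
  have ha : e * ↑u⁻¹ = a := by
    rw [he_def, mul_assoc, Units.mul_inv, mul_one]
  have heq : a + b * (y * (1 - a * u) * ↑u⁻¹) = (e + z * f) * ↑u⁻¹ := by
    calc a + b * (y * (1 - a * u) * ↑u⁻¹)
        = e * ↑u⁻¹ + (z * f) * ↑u⁻¹ := by
          rw [ha, hz_def, hf_def, he_def]; noncomm_ring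
      _ = (e + z * f) * ↑u⁻¹ := by noncomm_ring
  rw [heq]
  exact hw.mul (Units.isUnit u⁻¹)
end

section
/- If I is a left T-nilpotent left ideal of a ring R (for every sequence a₁, a₂, … in I there is n with a₁a₂⋯aₙ = 0), then IM ≠ M for every nonzero left R-module M. -/
universe u

/-- Bass's generalized Nakayama lemma: if `I` is a left `T`-nilpotent left ideal,
then `I M ≠ M` for every nonzero module `M`. -/
theorem tNilpotent_nakayama (R : Type u) [Ring R] (I : Ideal R)
    (hT : ∀ a : ℕ → R, (∀ n, a n ∈ I) → ∃ n : ℕ, ((List.range (n + 1)).map a).prod = 0)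
    (M : Type u) [AddCommGroup M] [Module R M] [Nontrivial M] :
    I • (⊤ : Submodule R M) ≠ ⊤ := by
  intro h
  obtain ⟨m0, hm0⟩ := exists_ne (0 : M)
  have step : ∀ r : R, ∀ x : M, r • x ≠ 0 → ∃ a, a ∈ I ∧ ∃ y : M, (r * a) • y ≠ 0 := by
    intro r x hx
    by_contra hc
    push_neg at hc
    apply hx
    have hxmem : x ∈ I • (⊤ : Submodule R M) := by rw [h]; trivial
    refine Submodule.smul_induction_on hxmem ?_ ?_
    · intro a ha y _
      rw [smul_smul]; exact hc a ha y
    · intro y z hy hz; rw [smul_add, hy, hz, add_zero]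
  let g : ℕ → Σ' (a : R) (r : R) (m : M), a ∈ I ∧ r • m ≠ 0 := fun n =>
    Nat.rec
      (let s := step 1 m0 (by simpa using hm0)
       ⟨s.choose, 1 * s.choose, s.choose_spec.2.choose, s.choose_spec.1,
        s.choose_spec.2.choose_spec⟩)
      (fun _ p =>
        let s := step p.2.1 p.2.2.1 p.2.2.2.2
        ⟨s.choose, p.2.1 * s.choose, s.choose_spec.2.choose, s.choose_spec.1,
         s.choose_spec.2.choose_spec⟩) n
  have ha : ∀ n, (g n).1 ∈ I := fun n => (g n).2.2.2.1
  have hprod : ∀ n, ((List.range (n + 1)).map (fun k => (g k).1)).prod = (g n).2.1 := by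
    intro n
    induction n with
    | zero =>
        simp only [List.range_succ, List.range_zero, List.nil_append, List.map_cons,
          List.map_nil, List.prod_cons, List.prod_nil, mul_one]
        exact (one_mul _).symm
    | succ n ih =>
      rw [List.range_succ, List.map_append, List.prod_append, ih]
      simp only [List.map_cons, List.map_nil, List.prod_cons, List.prod_nil, mul_one]
      rfl
  obtain ⟨n, hn⟩ := hT (fun k => (g k).1) ha
  rw [hprod n] at hn
  exact (g n).2.2.2.2 (by simp [hn])
end

section
/- If a ring R satisfies the Goodearl–Menal condition (B): for all a, b in R there exists a unit u with a − u and b − u⁻¹ both units, then R satisfies condition (A): whenever aR + bR = R there exists a unit u with a + bu a unit. -/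
/-- Goodearl–Menal: condition (B) implies condition (A) (unit 1-stable range). -/
theorem goodearl_menal_B_implies_A (R : Type*) [Ring R]
    (hB : ∀ a b : R, ∃ u : Rˣ, IsUnit (a - u) ∧ IsUnit (b - (↑u⁻¹ : R))) :
    ∀ a b : R, (∃ x y : R, a * x + b * y = 1) → ∃ u : Rˣ, IsUnit (a + b * u) := by
  rintro a b ⟨x, y, hxy⟩
  -- Stage 1: apply (B) to (x, a)
  obtain ⟨u₀, hx, ha⟩ := hB x a
  obtain ⟨s, hs⟩ := hx
  -- p := 1 - a*u₀ is a unit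
  have hp' : IsUnit (1 - a * ↑u₀) := by
    have h1 : (a - (↑u₀⁻¹ : R)) * ↑u₀ = -(1 - a * ↑u₀) := by
      rw [sub_mul, Units.inv_mul]; noncomm_ring
    have h2 := ha.mul u₀.isUnit
    rw [h1] at h2
    simpa using h2.neg
  obtain ⟨p, hp⟩ := hp'
  -- key identity : a * (s * p⁻¹) + b * (y * p⁻¹) = 1
  have h1 : a * ↑s + b * y = ↑p := by rw [hs, hp, mul_sub, sub_add_eq_add_sub, hxy]
  have key : a * (↑s * ↑p⁻¹) + b * (y * ↑p⁻¹) = 1 := by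
    rw [← mul_assoc, ← mul_assoc, ← add_mul, h1, Units.mul_inv]
  set y' : R := y * ↑p⁻¹ with hy'def
  -- Stage 2: apply (B) to (-y', -b)
  obtain ⟨u, hy, hb⟩ := hB (-y') (-b)
  have hw' : IsUnit (y' + ↑u) := by
    have := hy.neg
    have h3 : -(-y' - ↑u) = y' + ↑u := by noncomm_ring
    rwa [h3] at this
  obtain ⟨w, hw⟩ := hw'
  have hq : IsUnit (1 + b * ↑u) := by
    have h4 : (-b - (↑u⁻¹ : R)) * ↑u = -(1 + b * ↑u) := by
      rw [sub_mul, Units.inv_mul]; noncomm_ring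
    have h5 := hb.mul u.isUnit
    rw [h4] at h5
    simpa using h5.neg
  refine ⟨w * (s * p⁻¹)⁻¹, ?_⟩
  have hX : (↑((s * p⁻¹ : Rˣ)⁻¹) : R) = ↑(s * p⁻¹ : Rˣ)⁻¹ := rfl
  have hmain : a + b * ↑(w * (s * p⁻¹)⁻¹) = (1 + b * ↑u) * ↑((s * p⁻¹ : Rˣ)⁻¹) := by
    have hXX : (↑(s * p⁻¹ : Rˣ) : R) * ↑((s * p⁻¹ : Rˣ)⁻¹) = 1 := Units.mul_inv _
    have : a + b * ↑(w * (s * p⁻¹)⁻¹)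
        = (a * ↑(s * p⁻¹ : Rˣ) + b * ↑w) * ↑((s * p⁻¹ : Rˣ)⁻¹) := by
      rw [add_mul, mul_assoc, hXX, mul_one, Units.val_mul, mul_assoc]
    rw [this]
    congr 1
    have hcoe : (↑(s * p⁻¹ : Rˣ) : R) = ↑s * ↑p⁻¹ := rfl
    rw [hcoe, hw]
    calc a * (↑s * ↑p⁻¹) + b * (y' + ↑u)
        = (a * (↑s * ↑p⁻¹) + b * y') + b * ↑u := by noncomm_ring
      _ = 1 + b * ↑u := by rw [key]
  rw [hmain]
  exact hq.mul (s * p⁻¹)⁻¹.isUnit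
end
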